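/- arXiv:2411.05488 — 3 statements merged into one kernel-verified Lean document; each statement's English description precedes it below -/
import Mathlib

section
/- Let α ∈ (0,1), κ > 1 with κ(1−α) < 1, and 0 ≤ r ≤ t. Then ∫_0^r [ (r−s)^{−(1−α)} − (t−s)^{−(1−α)} ]^κ ds ≤ ∫_0^r [ (r−s)^{−κ(1−α)} − (t−s)^{−κ(1−α)} ] ds ≤ (t−r)^{1−κ(1−α)} / (1−κ(1−α)). -/
open MeasureTheory intervalIntegral
open scoped NNReal ENNReal

lemma aux_rpow_sub (a b κ : ℝ) (hb : 0 ≤ b) (hba : b ≤ a) (hκ : 1 ≤ κ) :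
    (a - b) ^ κ ≤ a ^ κ - b ^ κ := by
  have ha : 0 ≤ a := hb.trans hba
  have hab : 0 ≤ a - b := by linarith
  have h := NNReal.add_rpow_le_rpow_add (a - b).toNNReal b.toNNReal hκ
  have h2 := NNReal.coe_le_coe.2 h
  push_cast [NNReal.coe_rpow] at h2
  rw [Real.coe_toNNReal _ hab, Real.coe_toNNReal _ hb] at h2
  have h3 : (a - b) ^ κ + b ^ κ ≤ a ^ κ := by
    simpa using h2
  linarith

/-- For `α ∈ (0,1)`, `κ > 1` with `κ(1-α) < 1`, and `0 ≤ r ≤ t`: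
`∫_0^r [(r-s)^{-(1-α)} - (t-s)^{-(1-α)}]^κ ds
  ≤ ∫_0^r [(r-s)^{-κ(1-α)} - (t-s)^{-κ(1-α)}] ds
  ≤ (t-r)^{1-κ(1-α)} / (1-κ(1-α))`. -/
theorem kernel_difference_integral_bound (α κ r t : ℝ)
    (hα : α ∈ Set.Ioo (0 : ℝ) 1) (hκ : 1 < κ) (hκα : κ * (1 - α) < 1)
    (hr : 0 ≤ r) (hrt : r ≤ t) :
    (∫ s in (0 : ℝ)..r, ((r - s) ^ (-(1 - α)) - (t - s) ^ (-(1 - α))) ^ κ) ≤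
        (∫ s in (0 : ℝ)..r, ((r - s) ^ (-(κ * (1 - α))) - (t - s) ^ (-(κ * (1 - α))))) ∧
      (∫ s in (0 : ℝ)..r, ((r - s) ^ (-(κ * (1 - α))) - (t - s) ^ (-(κ * (1 - α))))) ≤
        (t - r) ^ (1 - κ * (1 - α)) / (1 - κ * (1 - α)) := by
  obtain ⟨hα0, hα1⟩ := hα
  set γ : ℝ := κ * (1 - α) with hγdef
  have hγ0 : 0 < γ := mul_pos (by linarith) (by linarith)
  have hγ1 : γ < 1 := hκα
  -- integrability of the two RHS pieces
  have Ir : IntervalIntegrable (fun s => (r - s) ^ (-γ)) volume 0 r := by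
    have := (intervalIntegral.intervalIntegrable_rpow' (r := -γ) (by linarith)
      (a := r) (b := 0)).comp_sub_left r
    simpa using this
  have It : IntervalIntegrable (fun s => (t - s) ^ (-γ)) volume 0 r := by
    have := (intervalIntegral.intervalIntegrable_rpow' (r := -γ) (by linarith)
      (a := t) (b := t - r)).comp_sub_left t
    simpa using this
  have Irt : IntervalIntegrable (fun s => (r - s) ^ (-γ) - (t - s) ^ (-γ)) volume 0 r :=
    Ir.sub It
  -- pointwise inequality on [0, r)
  have hpt : ∀ s ∈ Set.Ico (0:ℝ) r,
      ((r - s) ^ (-(1 - α)) - (t - s) ^ (-(1 - α))) ^ κ ≤ (r - s) ^ (-γ) - (t - s) ^ (-γ) := by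
    intro s hs
    obtain ⟨hs0, hsr⟩ := hs
    have hrs : 0 < r - s := by linarith
    have hts : 0 < t - s := by linarith
    set a := (r - s) ^ (-(1 - α)) with hadef
    set b := (t - s) ^ (-(1 - α)) with hbdef
    have hb0 : 0 ≤ b := Real.rpow_nonneg hts.le _
    have hba : b ≤ a := Real.rpow_le_rpow_of_nonpos hrs (by linarith) (by linarith)
    have haκ : a ^ κ = (r - s) ^ (-γ) := by
      rw [hadef, ← Real.rpow_mul hrs.le, hγdef]
      congr 1; ring
    have hbκ : b ^ κ = (t - s) ^ (-γ) := by
      rw [hbdef, ← Real.rpow_mul hts.le, hγdef]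
      congr 1; ring
    calc (a - b) ^ κ ≤ a ^ κ - b ^ κ := aux_rpow_sub a b κ hb0 hba hκ.le
      _ = (r - s) ^ (-γ) - (t - s) ^ (-γ) := by rw [haκ, hbκ]
  -- integrability of LHS
  have hmeas : AEStronglyMeasurable
      (fun s => ((r - s) ^ (-(1 - α)) - (t - s) ^ (-(1 - α))) ^ κ)
      (volume.restrict (Set.uIoc (0:ℝ) r)) := by
    have m : Measurable fun s : ℝ =>
        ((r - s) ^ (-(1 - α)) - (t - s) ^ (-(1 - α))) ^ κ := by fun_prop
    exact m.aestronglyMeasurable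
  have hIcc_ae : ∀ᵐ s ∂(volume.restrict (Set.Icc (0:ℝ) r)), s ∈ Set.Ico (0:ℝ) r := by
    have h1 : ∀ᵐ s ∂(volume.restrict (Set.Icc (0:ℝ) r)), s ∈ Set.Icc (0:ℝ) r :=
      ae_restrict_mem measurableSet_Icc
    have hne : (volume : Measure ℝ).restrict (Set.Icc (0:ℝ) r) {r} = 0 := by
      rw [Measure.restrict_apply (measurableSet_singleton r)]
      exact measure_mono_null Set.inter_subset_left (measure_singleton r)
    filter_upwards [h1, measure_eq_zero_iff_ae_notMem.mp hne] with s hs hsr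
    exact ⟨hs.1, lt_of_le_of_ne hs.2 hsr⟩
  have hIco_ae : ∀ᵐ s ∂(volume.restrict (Set.uIoc (0:ℝ) r)), s ∈ Set.Ico (0:ℝ) r := by
    rw [Set.uIoc_of_le hr]
    exact ae_restrict_of_ae_restrict_of_subset Set.Ioc_subset_Icc_self hIcc_ae
  have Ilhs : IntervalIntegrable
      (fun s => ((r - s) ^ (-(1 - α)) - (t - s) ^ (-(1 - α))) ^ κ) volume 0 r := by
    rw [intervalIntegrable_iff]
    apply Irt.def'.mono' hmeas
    filter_upwards [hIco_ae] with s hs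
    have h1 := hpt s hs
    have hrs : 0 < r - s := by linarith [hs.1, hs.2]
    have hts : 0 < t - s := by linarith [hs.1, hs.2, hrt]
    have hb0 : (0:ℝ) ≤ (t - s) ^ (-(1 - α)) := Real.rpow_nonneg hts.le _
    have hba : (t - s) ^ (-(1 - α)) ≤ (r - s) ^ (-(1 - α)) :=
      Real.rpow_le_rpow_of_nonpos hrs (by linarith) (by linarith)
    have h0 : (0:ℝ) ≤ ((r - s) ^ (-(1 - α)) - (t - s) ^ (-(1 - α))) ^ κ :=
      Real.rpow_nonneg (by linarith) _
    rw [Real.norm_eq_abs, abs_of_nonneg h0]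
    exact h1
  constructor
  · -- first inequality
    apply intervalIntegral.integral_mono_ae_restrict hr Ilhs Irt
    filter_upwards [hIcc_ae] with s hs using hpt s hs
  · -- second inequality: compute the integrals
    have e1 : (∫ s in (0:ℝ)..r, (r - s) ^ (-γ)) = r ^ (1 - γ) / (1 - γ) := by
      rw [intervalIntegral.integral_comp_sub_left (fun x => x ^ (-γ)) r]
      simp only [sub_self, sub_zero]
      rw [integral_rpow (Or.inl (by linarith))]
      rw [Real.zero_rpow (by intro h; rw [neg_add_eq_zero] at h; nlinarith)]
      ring_nf
    have e2 : (∫ s in (0:ℝ)..r, (t - s) ^ (-γ)) =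
        (t ^ (1 - γ) - (t - r) ^ (1 - γ)) / (1 - γ) := by
      rw [intervalIntegral.integral_comp_sub_left (fun x => x ^ (-γ)) t]
      simp only [sub_zero]
      rw [integral_rpow (Or.inl (by linarith))]
      ring_nf
    rw [intervalIntegral.integral_sub Ir It, e1, e2]
    rw [div_sub_div_same, div_le_div_iff_of_pos_right (by linarith)]
    have : r ^ (1 - γ) ≤ t ^ (1 - γ) :=
      Real.rpow_le_rpow hr (by linarith) (by linarith)
    linarith
end

section
/- Let α ∈ (0,1), T > 0, and γ ∈ AC^α([0,T],ℝ^k) with fractional derivative u = D^α_{0+}(γ − γ_0) ∈ L^∞. Define a(t | r, γ) := γ_t for t ∈ [0,r] and a(t | r, γ) := γ_0 + (1/Γ(α)) ∫_0^r u_s (t−s)^{α−1} ds for t ∈ (r,T]. Then for t ∈ [r,T], (1/Γ(α)) |∫_0^r u_s (t−s)^{α−1} ds| ≤ ‖γ − γ_0‖_{∞;[0,t]}. -/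
open MeasureTheory intervalIntegral Set

lemma rpow_sub_one' {x : ℝ} (hx : 0 < x) (α : ℝ) : x ^ (α - 1) = x ^ α / x := by
  rw [Real.rpow_sub hx, Real.rpow_one]

lemma betaReal {α : ℝ} (hα : α ∈ Set.Ioo (0 : ℝ) 1) :
    ∫ y in Set.Ioo (0:ℝ) 1, y ^ (-α) * (1-y) ^ (α-1) = Real.Gamma α * Real.Gamma (1-α) := by
  obtain ⟨h0, h1⟩ := hα
  have key := Complex.Gamma_mul_Gamma_eq_betaIntegral (s := ((1-α : ℝ) : ℂ)) (t := ((α : ℝ) : ℂ))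
    (by simpa using by linarith) (by simpa using h0)
  rw [Complex.betaIntegral] at key
  have hre : ((1-α:ℝ):ℂ) + ((α:ℝ):ℂ) = 1 := by push_cast; ring
  rw [hre, Complex.Gamma_one, one_mul] at key
  have heq : (∫ x in (0:ℝ)..1, (x:ℂ) ^ (((1-α:ℝ):ℂ) - 1) * ((1:ℂ) - x) ^ (((α:ℝ):ℂ) - 1))
      = ((∫ y in (0:ℝ)..1, y ^ (-α) * (1-y) ^ (α-1) : ℝ) : ℂ) := by
    rw [← intervalIntegral.integral_ofReal]
    apply intervalIntegral.integral_congr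
    intro x hx
    rw [Set.uIcc_of_le (by norm_num)] at hx
    simp only
    rw [show ((1-α:ℝ):ℂ) - 1 = ((-α : ℝ):ℂ) by push_cast; ring,
        show ((α:ℝ):ℂ) - 1 = ((α-1 : ℝ):ℂ) by push_cast; ring,
        show (1:ℂ) - (x:ℂ) = ((1-x:ℝ):ℂ) by push_cast; ring,
        ← Complex.ofReal_cpow hx.1, ← Complex.ofReal_cpow (by linarith [hx.2] : (0:ℝ) ≤ 1-x),
        ← Complex.ofReal_mul]
  rw [heq, Complex.Gamma_ofReal, Complex.Gamma_ofReal] at key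
  have : Real.Gamma (1-α) * Real.Gamma α = ∫ y in (0:ℝ)..1, y ^ (-α) * (1-y) ^ (α-1) := by
    exact_mod_cast key
  rw [intervalIntegral.integral_of_le (by norm_num : (0:ℝ) ≤ 1),
    MeasureTheory.integral_Ioc_eq_integral_Ioo] at this
  rw [← this]; ring

lemma int_beta01 {α : ℝ} (hα : α ∈ Set.Ioo (0 : ℝ) 1) :
    IntegrableOn (fun y => y ^ (-α) * (1-y) ^ (α-1)) (Set.Ioo (0:ℝ) 1) := by
  obtain ⟨h0, h1⟩ := hα
  have hc := Complex.betaIntegral_convergent (u := ((1-α:ℝ):ℂ)) (v := ((α:ℝ):ℂ))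
    (by simpa using by linarith) (by simpa using h0)
  have hre : IntegrableOn (fun x : ℝ => ((x:ℂ) ^ (((1-α:ℝ):ℂ)-1) * ((1:ℂ)-x) ^ (((α:ℝ):ℂ)-1)).re)
      (Set.Ioc (0:ℝ) 1) := by
    have := (hc.1 : IntegrableOn _ (Set.Ioc (0:ℝ) 1) volume)
    exact this.re
  have : IntegrableOn (fun y : ℝ => y ^ (-α) * (1-y) ^ (α-1)) (Set.Ioc (0:ℝ) 1) := by
    refine hre.congr_fun ?_ measurableSet_Ioc
    intro x hx
    simp only
    rw [show ((1-α:ℝ):ℂ) - 1 = ((-α : ℝ):ℂ) by push_cast; ring,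
        show ((α:ℝ):ℂ) - 1 = ((α-1 : ℝ):ℂ) by push_cast; ring,
        show (1:ℂ) - (x:ℂ) = ((1-x:ℝ):ℂ) by push_cast; ring,
        ← Complex.ofReal_cpow hx.1.le, ← Complex.ofReal_cpow (by linarith [hx.2] : (0:ℝ) ≤ 1-x),
        ← Complex.ofReal_mul, Complex.ofReal_re]
  exact this.mono_set Set.Ioo_subset_Ioc_self

lemma alg_aux (α : ℝ) {A B y oy d oρ : ℝ} (hA : 0<A) (hB : 0<B) (hy : 0<y)
    (hoy : 0<oy) (hd : 0<d) (hoρ : 0<oρ) :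
    A*oρ/d^2 * ((A*oρ*y/d) ^ (-α) * (A*oy/d) ^ (α-1) / (B*oρ/d))
      = (B ^ (α-1) * (B*oρ) ^ (-α)) * (y ^ (-α) * oy ^ (α-1)) := by
  rw [Real.rpow_neg (by positivity), Real.rpow_neg (by positivity), Real.rpow_neg hy.le,
    rpow_sub_one' (by positivity) α, rpow_sub_one' hoy α, rpow_sub_one' hB α,
    Real.div_rpow (by positivity) hd.le, Real.div_rpow (by positivity) hd.le,
    Real.mul_rpow (by positivity) hy.le, Real.mul_rpow hA.le hoρ.le,
    Real.mul_rpow hA.le hoy.le, Real.mul_rpow hB.le hoρ.le]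
  have p1 := (Real.rpow_pos_of_pos hA α).ne'
  have p2 := (Real.rpow_pos_of_pos hB α).ne'
  have p3 := (Real.rpow_pos_of_pos hy α).ne'
  have p4 := (Real.rpow_pos_of_pos hoy α).ne'
  have p5 := (Real.rpow_pos_of_pos hoρ α).ne'
  have p6 := (Real.rpow_pos_of_pos hd α).ne'
  field_simp

lemma keyA {α σ r t : ℝ} (hα : α ∈ Set.Ioo (0:ℝ) 1) (hσr : σ < r) (hrt : r < t) :
    (∫ ξ in Set.Ioo σ r, (r-ξ) ^ (-α) * (ξ-σ) ^ (α-1) / (t-ξ)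
      = Real.Gamma α * Real.Gamma (1-α) * ((t-σ) ^ (α-1) * (t-r) ^ (-α)))
    ∧ IntegrableOn (fun ξ => (r-ξ) ^ (-α) * (ξ-σ) ^ (α-1) / (t-ξ)) (Set.Ioo σ r) := by
  obtain ⟨ha0, ha1⟩ := hα
  have hA : 0 < r - σ := by linarith
  have hB : 0 < t - σ := by linarith
  obtain ⟨ρ, hρdef⟩ : ∃ ρ : ℝ, ρ = (r - σ)/(t - σ) := ⟨_, rfl⟩
  have hρ0 : 0 < ρ := hρdef ▸ div_pos hA hB
  have hρ1 : ρ < 1 := hρdef ▸ (div_lt_one hB).2 (by linarith)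
  have hAB : r - σ = ρ * (t - σ) := by rw [hρdef]; field_simp
  have htr : t - r = (t - σ) * (1 - ρ) := by linear_combination -hAB
  obtain ⟨f, hf⟩ : ∃ f : ℝ → ℝ, f = fun y => σ + (r - σ) * ((1 - y)/(1 - ρ*y)) := ⟨_, rfl⟩
  obtain ⟨f', hf'⟩ : ∃ f' : ℝ → ℝ, f' = fun y => (r - σ) * ((ρ - 1)/(1 - ρ*y)^2) := ⟨_, rfl⟩
  have hdpos : ∀ y ∈ Set.Ioo (0:ℝ) 1, 0 < 1 - ρ*y := by
    rintro y ⟨hy0, hy1⟩; nlinarith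
  have hcomp1 : ∀ y ∈ Set.Ioo (0:ℝ) 1, f y - σ = (r-σ)*(1-y)/(1-ρ*y) := by
    rintro y hy; simp only [hf]; ring
  have hcomp2 : ∀ y ∈ Set.Ioo (0:ℝ) 1, r - f y = (r-σ)*(1-ρ)*y/(1-ρ*y) := by
    rintro y hy
    have hd := (hdpos y hy).ne'
    have hd' : 1 - y*ρ ≠ 0 := by rwa [mul_comm y ρ]
    simp only [hf]
    field_simp
    ring
  have hcomp3 : ∀ y ∈ Set.Ioo (0:ℝ) 1, t - f y = (t-σ)*(1-ρ)/(1-ρ*y) := by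
    rintro y hy
    have hd := (hdpos y hy).ne'
    have hd' : 1 - y*ρ ≠ 0 := by rwa [mul_comm y ρ]
    simp only [hf]
    field_simp
    linear_combination (y - 1) * hAB
  have hderiv : ∀ y ∈ Set.Ioo (0:ℝ) 1, HasDerivWithinAt f (f' y) (Set.Ioo (0:ℝ) 1) y := by
    rintro y hy
    have hd := (hdpos y hy).ne'
    have h1 : HasDerivAt (fun y : ℝ => (1 - y)/(1 - ρ*y)) ((ρ-1)/(1-ρ*y)^2) y := by
      have hu : HasDerivAt (fun y : ℝ => 1 - y) (-1) y := by
        simpa using ((hasDerivAt_id y).const_sub 1)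
      have hv : HasDerivAt (fun y : ℝ => 1 - ρ*y) (-ρ) y := by
        simpa using ((hasDerivAt_id y).const_mul ρ).const_sub 1
      have := hu.div hv hd
      refine this.congr_deriv ?_
      ring
    have h2 : HasDerivAt f (f' y) y := by
      rw [hf, hf']
      exact (h1.const_mul (r-σ)).const_add σ
    exact h2.hasDerivWithinAt
  have hinj : Set.InjOn f (Set.Ioo (0:ℝ) 1) := by
    rintro y1 h1 y2 h2 heq
    have hd1 := hdpos y1 h1
    have hd2 := hdpos y2 h2
    have e1 := hcomp3 y1 h1
    have e2 := hcomp3 y2 h2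
    rw [heq, e2] at e1
    field_simp at e1
    exact mul_left_cancel₀ hρ0.ne' (by linarith [mul_left_cancel₀ (sub_pos.2 hρ1).ne' e1])
  have himg : f '' Set.Ioo (0:ℝ) 1 = Set.Ioo σ r := by
    ext ξ
    constructor
    · rintro ⟨y, hy, rfl⟩
      obtain ⟨hy0, hy1⟩ := hy
      have hd := hdpos y ⟨hy0, hy1⟩
      have e1 := hcomp1 y ⟨hy0, hy1⟩
      have e2 := hcomp2 y ⟨hy0, hy1⟩
      have h1ρ' : (0:ℝ) < 1 - ρ := by linarith
      have p1 : 0 < (r-σ)*(1-y)/(1-ρ*y) := div_pos (by nlinarith) hd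
      have p2 : 0 < (r-σ)*(1-ρ)*y/(1-ρ*y) := div_pos (by positivity) hd
      exact ⟨by linarith, by linarith⟩
    · rintro ⟨hξ1, hξ2⟩
      have htξ : (0:ℝ) < t - ξ := by linarith
      have htrne : t - r ≠ 0 := (by linarith : (0:ℝ) < t - r).ne'
      have hy₀ : (t-σ)*(r-ξ)/((r-σ)*(t-ξ)) ∈ Set.Ioo (0:ℝ) 1 := by
        constructor
        · have : (0:ℝ) < r - ξ := by linarith
          positivity
        · rw [div_lt_one (by positivity)]
          nlinarith
      refine ⟨(t-σ)*(r-ξ)/((r-σ)*(t-ξ)), hy₀, ?_⟩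
      have h2 : 1 - ρ*((t-σ)*(r-ξ)/((r-σ)*(t-ξ))) = (t-r)/(t-ξ) := by
        field_simp
        linear_combination (r-ξ) * hAB
      have h1 : 1 - (t-σ)*(r-ξ)/((r-σ)*(t-ξ)) = (t-r)*(ξ-σ)/((r-σ)*(t-ξ)) := by
        field_simp
        ring
      simp only [hf]
      rw [h1, h2]
      field_simp
      ring
  have hpt : ∀ y ∈ Set.Ioo (0:ℝ) 1,
      |f' y| • ((r - f y) ^ (-α) * (f y - σ) ^ (α-1) / (t - f y))
        = ((t-σ) ^ (α-1) * (t-r) ^ (-α)) * (y ^ (-α) * (1-y) ^ (α-1)) := by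
    rintro y hy
    obtain ⟨hy0, hy1⟩ := hy
    have hd := hdpos y ⟨hy0, hy1⟩
    have h1y : (0:ℝ) < 1 - y := by linarith
    have h1ρ : (0:ℝ) < 1 - ρ := by linarith
    rw [hcomp1 y ⟨hy0, hy1⟩, hcomp2 y ⟨hy0, hy1⟩, hcomp3 y ⟨hy0, hy1⟩]
    have habs : |f' y| = (r-σ)*(1-ρ)/(1-ρ*y)^2 := by
      rw [abs_of_neg (by
        simp only [hf']
        have h5 : ρ - 1 < 0 := by linarith
        exact mul_neg_of_pos_of_neg hA (div_neg_of_neg_of_pos h5 (by positivity)))]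
      simp only [hf']
      field_simp
      ring
    rw [habs, htr, smul_eq_mul]
    exact alg_aux α hA hB hy0 h1y hd h1ρ
  constructor
  · rw [← himg,
      MeasureTheory.integral_image_eq_integral_abs_deriv_smul measurableSet_Ioo hderiv hinj]
    rw [MeasureTheory.setIntegral_congr_fun measurableSet_Ioo hpt,
      MeasureTheory.integral_const_mul, betaReal ⟨ha0, ha1⟩]
    ring
  · rw [← himg]
    refine (MeasureTheory.integrableOn_image_iff_integrableOn_abs_deriv_smul
      measurableSet_Ioo hderiv hinj _).2 ?_
    have hib : IntegrableOn
        (fun y => ((t-σ) ^ (α-1) * (t-r) ^ (-α)) * (y ^ (-α) * (1-y) ^ (α-1)))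
        (Set.Ioo (0:ℝ) 1) := (int_beta01 ⟨ha0, ha1⟩).const_mul _
    exact hib.congr_fun (fun y hy => (hpt y hy).symm) measurableSet_Ioo

/-- Lemma 7.2 in Gomoyunov (2020): for `γ ∈ AC^α` with fractional derivative `u`, the tail
term of the functional `a(·|r,γ)` satisfies, for `t ∈ [r,T]`,
`(1/Γ(α)) ‖∫_0^r (t-s)^{α-1} u_s ds‖ ≤ ‖γ - γ_0‖_{∞;[0,t]}`. -/
theorem tail_functional_sup_bound {k : ℕ} (α T : ℝ)
    (hα : α ∈ Set.Ioo (0 : ℝ) 1) (hT : 0 < T)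
    (u : ℝ → EuclideanSpace ℝ (Fin k)) (hu_meas : Measurable u)
    (hu_bdd : ∃ M : ℝ, ∀ s ∈ Set.Icc (0 : ℝ) T, ‖u s‖ ≤ M)
    (γ0 : EuclideanSpace ℝ (Fin k)) (γ : ℝ → EuclideanSpace ℝ (Fin k))
    (hγ : ∀ t ∈ Set.Icc (0 : ℝ) T,
      γ t = γ0 + (1 / Real.Gamma α) • ∫ s in (0 : ℝ)..t, ((t - s) ^ (α - 1)) • u s) :
    ∀ r t : ℝ, 0 ≤ r → r ≤ t → t ≤ T →
      (1 / Real.Gamma α) * ‖∫ s in (0 : ℝ)..r, ((t - s) ^ (α - 1)) • u s‖ ≤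
        ⨆ τ : Set.Icc (0 : ℝ) t, ‖γ (τ : ℝ) - γ0‖ := by
  obtain ⟨ha0, ha1⟩ := hα
  obtain ⟨M, hM⟩ := hu_bdd
  intro r t hr hrt htT
  have hM0 : 0 ≤ M := le_trans (norm_nonneg _) (hM 0 ⟨le_refl _, hT.le⟩)
  have hΓ : 0 < Real.Gamma α := Real.Gamma_pos_of_pos ha0
  have hΓ1 : 0 < Real.Gamma (1-α) := Real.Gamma_pos_of_pos (by linarith)
  have ht0 : 0 ≤ t := le_trans hr hrt
  -- basic integrability of the kernel σ ↦ (τ-σ)^(α-1) on (0,τ)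
  have hker : ∀ τ : ℝ, 0 ≤ τ → IntervalIntegrable (fun σ => (τ-σ) ^ (α-1)) volume 0 τ := by
    intro τ hτ
    have h1 : IntervalIntegrable (fun x : ℝ => x ^ (α-1)) volume 0 τ :=
      intervalIntegral.intervalIntegrable_rpow' (by linarith)
    simpa using (h1.comp_sub_left τ).symm
  have hkerval : ∀ τ : ℝ, 0 ≤ τ → (∫ σ in (0:ℝ)..τ, (τ-σ) ^ (α-1)) = τ ^ α / α := by
    intro τ hτ
    rw [intervalIntegral.integral_comp_sub_left (fun x : ℝ => x ^ (α-1)) τ]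
    simp only [sub_self, sub_zero]
    rw [integral_rpow (Or.inl (by linarith))]
    rw [Real.zero_rpow (by linarith : α - 1 + 1 ≠ 0)]
    norm_num [sub_add_cancel]
  -- integrand integrability
  have huint : ∀ τ : ℝ, 0 ≤ τ → τ ≤ T →
      IntegrableOn (fun σ => ((τ-σ) ^ (α-1)) • u σ) (Set.Ioo 0 τ) := by
    intro τ hτ0 hτT
    have hgi : IntegrableOn (fun σ => M * (τ-σ) ^ (α-1)) (Set.Ioo 0 τ) :=
      (((hker τ hτ0).1.mono_set Set.Ioo_subset_Ioc_self).const_mul M :)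
    refine Integrable.mono' hgi ?_ ?_
    · exact (Measurable.smul (by fun_prop : Measurable fun σ => (τ-σ) ^ (α-1)) hu_meas).aestronglyMeasurable
    · filter_upwards [ae_restrict_mem measurableSet_Ioo] with σ hσ
      rw [norm_smul, Real.norm_eq_abs, abs_of_nonneg (Real.rpow_nonneg (by linarith [hσ.2]) _)]
      rw [mul_comm M _]
      exact mul_le_mul_of_nonneg_left (hM σ ⟨hσ.1.le, by linarith [hσ.2]⟩)
        (Real.rpow_nonneg (by linarith [hσ.2]) _)
  -- norm bound on the fractional integrals
  have hJb : ∀ τ : ℝ, 0 ≤ τ → τ ≤ T →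
      ‖∫ s in (0:ℝ)..τ, ((τ-s) ^ (α-1)) • u s‖ ≤ M * T ^ α / α := by
    intro τ hτ0 hτT
    calc ‖∫ s in (0:ℝ)..τ, ((τ-s) ^ (α-1)) • u s‖
        ≤ ∫ s in (0:ℝ)..τ, ‖((τ-s) ^ (α-1)) • u s‖ :=
          intervalIntegral.norm_integral_le_integral_norm hτ0
      _ ≤ ∫ s in (0:ℝ)..τ, M * (τ-s) ^ (α-1) := by
          rw [intervalIntegral.integral_of_le hτ0, intervalIntegral.integral_of_le hτ0,
            MeasureTheory.integral_Ioc_eq_integral_Ioo, MeasureTheory.integral_Ioc_eq_integral_Ioo]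
          refine setIntegral_mono_on ((huint τ hτ0 hτT).norm)
            (((hker τ hτ0).1.mono_set Set.Ioo_subset_Ioc_self).const_mul M :)
            measurableSet_Ioo ?_
          intro σ hσ
          rw [norm_smul, Real.norm_eq_abs, abs_of_nonneg (Real.rpow_nonneg (by linarith [hσ.2]) _),
            mul_comm M _]
          exact mul_le_mul_of_nonneg_left (hM σ ⟨hσ.1.le, by linarith [hσ.2]⟩)
            (Real.rpow_nonneg (by linarith [hσ.2]) _)
      _ = M * (τ ^ α / α) := by rw [intervalIntegral.integral_const_mul, hkerval τ hτ0]
      _ ≤ M * (T ^ α / α) := by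
          gcongr
      _ = M * T ^ α / α := by ring
  have hb : ∀ τ ∈ Set.Icc (0:ℝ) t, ‖γ τ - γ0‖ ≤ (1/Real.Gamma α) * (M * T ^ α / α) := by
    intro τ hτ
    have hτT : τ ∈ Set.Icc (0:ℝ) T := ⟨hτ.1, le_trans hτ.2 htT⟩
    rw [hγ τ hτT, add_sub_cancel_left, norm_smul, Real.norm_eq_abs,
      abs_of_pos (by positivity)]
    exact mul_le_mul_of_nonneg_left (hJb τ hτ.1 hτT.2) (by positivity)
  have hbdd : BddAbove (Set.range fun τ : Set.Icc (0:ℝ) t => ‖γ (τ:ℝ) - γ0‖) :=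
    ⟨(1/Real.Gamma α) * (M * T ^ α / α), forall_mem_range.2 fun τ => hb τ τ.2⟩
  have hS : ∀ τ ∈ Set.Icc (0:ℝ) t, ‖γ τ - γ0‖ ≤ ⨆ τ : Set.Icc (0:ℝ) t, ‖γ (τ:ℝ) - γ0‖ :=
    fun τ hτ => le_ciSup hbdd (⟨τ, hτ⟩ : Set.Icc (0:ℝ) t)
  have hS0 : 0 ≤ ⨆ τ : Set.Icc (0:ℝ) t, ‖γ (τ:ℝ) - γ0‖ :=
    le_trans (norm_nonneg _) (hS 0 ⟨le_refl _, ht0⟩)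
  rcases eq_or_lt_of_le hr with hr0 | hr0
  · rw [← hr0, intervalIntegral.integral_same]
    simpa using hS0
  rcases eq_or_lt_of_le hrt with hrt0 | hrt0
  · subst hrt0
    have := hγ r ⟨hr, htT⟩
    have h2 : γ r - γ0 = (1/Real.Gamma α) • ∫ s in (0:ℝ)..r, ((r-s) ^ (α-1)) • u s := by
      rw [this]; abel
    have h3 : (1/Real.Gamma α) * ‖∫ s in (0:ℝ)..r, ((r-s) ^ (α-1)) • u s‖ = ‖γ r - γ0‖ := by
      rw [h2, norm_smul, Real.norm_eq_abs, abs_of_pos (by positivity)]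
    rw [h3]
    exact hS r ⟨hr, le_refl r⟩
  -- main case : 0 < r < t
  have htr : 0 < t - r := by linarith
  have ht : 0 < t := by linarith
  have hc : 0 < Real.Gamma α * Real.Gamma (1-α) := mul_pos hΓ hΓ1
  obtain ⟨K, hK⟩ : ∃ K : ℝ → ℝ, K = fun ξ => (t-r) ^ α * ((r-ξ) ^ (-α) / (t-ξ)) := ⟨_, rfl⟩
  have hKpos : ∀ ξ ∈ Set.Ioo (0:ℝ) r, 0 ≤ K ξ := by
    rintro ξ ⟨h1, h2⟩
    have h3 : 0 < r - ξ := by linarith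
    have h4 : 0 < t - ξ := by linarith
    rw [hK]
    positivity
  have hbase : IntegrableOn (fun ξ => (r-ξ) ^ (-α)) (Set.Ioo 0 r) := by
    have h1 : IntervalIntegrable (fun x : ℝ => x ^ (-α)) volume 0 r :=
      intervalIntegral.intervalIntegrable_rpow' (by linarith)
    have h2 := (h1.comp_sub_left r).symm
    simp only [sub_self, sub_zero] at h2
    exact h2.1.mono_set Set.Ioo_subset_Ioc_self
  have hKint : IntegrableOn K (Set.Ioo 0 r) := by
    refine Integrable.mono' (hbase.const_mul ((t-r) ^ α * (t-r)⁻¹)) ?_ ?_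
    · rw [hK]
      exact (by fun_prop : Measurable fun ξ => (t-r) ^ α * ((r-ξ) ^ (-α)/(t-ξ))).aestronglyMeasurable
    · filter_upwards [ae_restrict_mem measurableSet_Ioo] with ξ hξ
      have h3 : 0 < r - ξ := by linarith [hξ.2]
      have h4 : 0 < t - ξ := by linarith [hξ.2]
      rw [hK, Real.norm_eq_abs, abs_of_nonneg (by positivity)]
      calc (t-r) ^ α * ((r-ξ) ^ (-α)/(t-ξ)) = ((t-r) ^ α * (r-ξ) ^ (-α)) * (t-ξ)⁻¹ := by ring
        _ ≤ ((t-r) ^ α * (r-ξ) ^ (-α)) * (t-r)⁻¹ := by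
            refine mul_le_mul_of_nonneg_left ?_ (by positivity)
            exact inv_anti₀ htr (by linarith)
        _ = (t-r) ^ α * (t-r)⁻¹ * (r-ξ) ^ (-α) := by ring
  have hKval : ∀ σ ∈ Set.Ico (0:ℝ) r, (∫ ξ in Set.Ioo σ r, K ξ * (ξ-σ) ^ (α-1))
      = (Real.Gamma α * Real.Gamma (1-α)) * (t-σ) ^ (α-1) := by
    intro σ hσ
    have e := (keyA ⟨ha0, ha1⟩ hσ.2 hrt0).1
    have hcan : (t-r) ^ α * (t-r) ^ (-α) = 1 := by
      rw [← Real.rpow_add htr]; norm_num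
    calc (∫ ξ in Set.Ioo σ r, K ξ * (ξ-σ) ^ (α-1))
        = ∫ ξ in Set.Ioo σ r, (t-r) ^ α * ((r-ξ) ^ (-α) * (ξ-σ) ^ (α-1) / (t-ξ)) := by
          refine setIntegral_congr_fun measurableSet_Ioo (fun ξ _ => ?_)
          rw [hK]; ring
      _ = (t-r) ^ α * (Real.Gamma α * Real.Gamma (1-α) * ((t-σ) ^ (α-1) * (t-r) ^ (-α))) := by
          rw [MeasureTheory.integral_const_mul, e]
      _ = (Real.Gamma α * Real.Gamma (1-α)) * (t-σ) ^ (α-1) := by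
          rw [show (t-r) ^ α * (Real.Gamma α * Real.Gamma (1-α) * ((t-σ) ^ (α-1) * (t-r) ^ (-α)))
            = (Real.Gamma α * Real.Gamma (1-α)) * (t-σ) ^ (α-1) * ((t-r) ^ α * (t-r) ^ (-α))
            from by ring, hcan, mul_one]
  have hKbigint : IntegrableOn (fun ξ => K ξ * (ξ-(0:ℝ)) ^ (α-1)) (Set.Ioo 0 r) := by
    have h2 := (keyA (σ := 0) ⟨ha0, ha1⟩ hr0 hrt0).2
    have h3 : IntegrableOn (fun ξ => (t-r) ^ α * ((r-ξ) ^ (-α) * (ξ-(0:ℝ)) ^ (α-1) / (t-ξ)))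
        (Set.Ioo 0 r) := h2.const_mul _
    refine h3.congr_fun (fun ξ _ => ?_) measurableSet_Ioo
    rw [hK]; ring
  have hmass : (∫ ξ in Set.Ioo (0:ℝ) r, K ξ) ≤ Real.Gamma α * Real.Gamma (1-α) := by
    have e := hKval 0 ⟨le_refl _, hr0⟩
    have hbig2 : IntegrableOn (fun ξ => (K ξ * (ξ-(0:ℝ)) ^ (α-1)) * t ^ (1-α)) (Set.Ioo 0 r) :=
      hKbigint.mul_const _
    have hle : ∀ ξ ∈ Set.Ioo (0:ℝ) r, K ξ ≤ (K ξ * (ξ-(0:ℝ)) ^ (α-1)) * t ^ (1-α) := by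
      rintro ξ ⟨h1, h2⟩
      have hξt : ξ ≤ t := by linarith
      have hquot : (1:ℝ) ≤ (ξ/t) ^ (α-1) :=
        Real.one_le_rpow_of_pos_of_le_one_of_nonpos (div_pos h1 ht) ((div_le_one ht).2 hξt)
          (by linarith)
      have hsplit : (ξ/t) ^ (α-1) = ξ ^ (α-1) * t ^ (1-α) := by
        rw [Real.div_rpow h1.le ht.le, div_eq_mul_inv, show (1-α) = -(α-1) from by ring,
          Real.rpow_neg ht.le]
      calc K ξ = K ξ * 1 := by ring
        _ ≤ K ξ * ((ξ/t) ^ (α-1)) := by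
            exact mul_le_mul_of_nonneg_left hquot (hKpos ξ ⟨h1, h2⟩)
        _ = (K ξ * (ξ-(0:ℝ)) ^ (α-1)) * t ^ (1-α) := by rw [hsplit, sub_zero]; ring
    calc (∫ ξ in Set.Ioo (0:ℝ) r, K ξ)
        ≤ ∫ ξ in Set.Ioo (0:ℝ) r, (K ξ * (ξ-(0:ℝ)) ^ (α-1)) * t ^ (1-α) :=
          setIntegral_mono_on hKint hbig2 measurableSet_Ioo hle
      _ = (∫ ξ in Set.Ioo (0:ℝ) r, K ξ * (ξ-(0:ℝ)) ^ (α-1)) * t ^ (1-α) := by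
          rw [MeasureTheory.integral_mul_const]
      _ = (Real.Gamma α * Real.Gamma (1-α)) * (t ^ (α-1) * t ^ (1-α)) := by
          rw [e]; ring
      _ = Real.Gamma α * Real.Gamma (1-α) := by
          rw [← Real.rpow_add ht]; norm_num
  -- the Fubini kernel
  obtain ⟨H, hH⟩ : ∃ H : ℝ → ℝ → EuclideanSpace ℝ (Fin k),
      H = fun ξ σ => if σ < ξ then (K ξ * (ξ-σ) ^ (α-1)) • u σ else 0 := ⟨_, rfl⟩
  have hHmeas : AEStronglyMeasurable (Function.uncurry H)
      ((volume.restrict (Set.Ioo (0:ℝ) r)).prod (volume.restrict (Set.Ioo (0:ℝ) r))) := by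
    rw [hH]
    refine Measurable.aestronglyMeasurable ?_
    show Measurable fun p : ℝ × ℝ => if p.2 < p.1 then (K p.1 * (p.1-p.2) ^ (α-1)) • u p.2 else 0
    refine Measurable.ite (measurableSet_lt measurable_snd measurable_fst) ?_ measurable_const
    exact Measurable.smul
      (by rw [hK]; fun_prop : Measurable fun p : ℝ×ℝ => K p.1 * (p.1-p.2) ^ (α-1))
      (hu_meas.comp measurable_snd)
  have hsecH : ∀ ξ : ℝ, (fun σ => H ξ σ)
      = Set.indicator (Set.Iio ξ) (fun σ => (K ξ * (ξ-σ) ^ (α-1)) • u σ) := by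
    intro ξ; funext σ; rw [hH]; simp [Set.indicator, Set.mem_Iio]
  have hsec : ∀ ξ ∈ Set.Ioo (0:ℝ) r,
      IntegrableOn (fun σ => (K ξ * (ξ-σ) ^ (α-1)) • u σ) (Set.Ioo 0 ξ) := by
    intro ξ hξ
    have heq : (fun σ => (K ξ * (ξ-σ) ^ (α-1)) • u σ)
        = fun σ => K ξ • (((ξ-σ) ^ (α-1)) • u σ) := by
      funext σ; rw [mul_smul]
    rw [heq]
    exact (huint ξ hξ.1.le (by linarith [hξ.2])).smul (K ξ)
  have hint_sec : ∀ ξ ∈ Set.Ioo (0:ℝ) r,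
      Integrable (fun σ => H ξ σ) (volume.restrict (Set.Ioo (0:ℝ) r)) := by
    intro ξ hξ
    rw [hsecH ξ, integrable_indicator_iff measurableSet_Iio]
    rw [IntegrableOn, Measure.restrict_restrict measurableSet_Iio, Set.inter_comm,
      Set.Ioo_inter_Iio, min_eq_right hξ.2.le]
    exact hsec ξ hξ
  -- value of inner integral in ξ
  have hval_sec : ∀ ξ ∈ Set.Ioo (0:ℝ) r,
      (∫ σ in Set.Ioo (0:ℝ) r, H ξ σ) = K ξ • (Real.Gamma α • (γ ξ - γ0)) := by
    intro ξ hξ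
    have hγξ := hγ ξ ⟨hξ.1.le, by linarith [hξ.2]⟩
    have hJ : (∫ σ in Set.Ioo (0:ℝ) ξ, ((ξ-σ) ^ (α-1)) • u σ)
        = Real.Gamma α • (γ ξ - γ0) := by
      have h1 : γ ξ - γ0 = (1/Real.Gamma α) • ∫ s in (0:ℝ)..ξ, ((ξ-s) ^ (α-1)) • u s := by
        rw [hγξ]; abel
      rw [intervalIntegral.integral_of_le hξ.1.le, MeasureTheory.integral_Ioc_eq_integral_Ioo]
        at h1
      rw [h1, smul_smul]
      rw [mul_one_div, div_self hΓ.ne', one_smul]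
    rw [hsecH ξ, MeasureTheory.setIntegral_indicator measurableSet_Iio,
      Set.Ioo_inter_Iio, min_eq_right hξ.2.le]
    have heq : (fun σ => (K ξ * (ξ-σ) ^ (α-1)) • u σ)
        = fun σ => K ξ • (((ξ-σ) ^ (α-1)) • u σ) := by
      funext σ; rw [mul_smul]
    rw [heq, MeasureTheory.integral_smul, hJ]
  -- product integrability
  have hprod : Integrable (Function.uncurry H)
      ((volume.restrict (Set.Ioo (0:ℝ) r)).prod (volume.restrict (Set.Ioo (0:ℝ) r))) := by
    rw [MeasureTheory.integrable_prod_iff hHmeas]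
    constructor
    · filter_upwards [ae_restrict_mem measurableSet_Ioo] with ξ hξ
      exact hint_sec ξ hξ
    · refine Integrable.mono' (hKint.const_mul (M * r ^ α / α)) ?_ ?_
      · exact hHmeas.norm.integral_prod_right'
      · filter_upwards [ae_restrict_mem measurableSet_Ioo] with ξ hξ
        simp only [Function.uncurry_apply_pair]
        have hnn : 0 ≤ ∫ σ in Set.Ioo (0:ℝ) r, ‖H ξ σ‖ :=
          MeasureTheory.integral_nonneg (fun σ => norm_nonneg _)
        rw [Real.norm_eq_abs, abs_of_nonneg hnn]
        have h1 : (∫ σ in Set.Ioo (0:ℝ) r, ‖H ξ σ‖)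
            = ∫ σ in Set.Ioo (0:ℝ) ξ, ‖(K ξ * (ξ-σ) ^ (α-1)) • u σ‖ := by
          rw [show (fun σ => ‖H ξ σ‖)
              = Set.indicator (Set.Iio ξ) (fun σ => ‖(K ξ * (ξ-σ) ^ (α-1)) • u σ‖) from by
            funext σ; rw [hH]; simp [Set.indicator, Set.mem_Iio, apply_ite norm]]
          rw [MeasureTheory.setIntegral_indicator measurableSet_Iio,
            Set.Ioo_inter_Iio, min_eq_right hξ.2.le]
        rw [h1]
        have hKξ := hKpos ξ hξ
        calc (∫ σ in Set.Ioo (0:ℝ) ξ, ‖(K ξ * (ξ-σ) ^ (α-1)) • u σ‖)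
            ≤ ∫ σ in Set.Ioo (0:ℝ) ξ, K ξ * (M * (ξ-σ) ^ (α-1)) := by
              refine setIntegral_mono_on ((hsec ξ hξ).norm) ?_ measurableSet_Ioo ?_
              · exact (((hker ξ hξ.1.le).1.mono_set
                  Set.Ioo_subset_Ioc_self).const_mul M).const_mul (K ξ)
              · rintro σ ⟨hσ1, hσ2⟩
                have hξσ : (0:ℝ) ≤ ξ - σ := by linarith
                rw [norm_smul, Real.norm_eq_abs,
                  abs_of_nonneg (mul_nonneg hKξ (Real.rpow_nonneg hξσ _))]
                rw [show K ξ * (M * (ξ-σ) ^ (α-1)) = (K ξ * (ξ-σ) ^ (α-1)) * M from by ring]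
                exact mul_le_mul_of_nonneg_left
                  (hM σ ⟨hσ1.le, by linarith [hξ.2]⟩)
                  (mul_nonneg hKξ (Real.rpow_nonneg hξσ _))
          _ = K ξ * (M * (ξ ^ α / α)) := by
              rw [MeasureTheory.integral_const_mul, MeasureTheory.integral_const_mul,
                ← MeasureTheory.integral_Ioc_eq_integral_Ioo,
                ← intervalIntegral.integral_of_le hξ.1.le, hkerval ξ hξ.1.le]
          _ ≤ M * r ^ α / α * K ξ := by
              rw [show M * r ^ α / α * K ξ = K ξ * (M * (r ^ α / α)) from by ring]
              refine mul_le_mul_of_nonneg_left ?_ hKξ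
              refine mul_le_mul_of_nonneg_left ?_ hM0
              gcongr
              · exact hξ.1.le
              · exact hξ.2.le
  -- Fubini swap and evaluation
  have hswap := MeasureTheory.integral_integral_swap hprod
  have hval_sec2 : ∀ σ ∈ Set.Ioo (0:ℝ) r,
      (∫ ξ in Set.Ioo (0:ℝ) r, H ξ σ)
        = ((Real.Gamma α * Real.Gamma (1-α)) * (t-σ) ^ (α-1)) • u σ := by
    intro σ hσ
    have hHσ : (fun ξ => H ξ σ)
        = Set.indicator (Set.Ioi σ) (fun ξ => (K ξ * (ξ-σ) ^ (α-1)) • u σ) := by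
      funext ξ; rw [hH]; simp [Set.indicator, Set.mem_Ioi]
    rw [hHσ, MeasureTheory.setIntegral_indicator measurableSet_Ioi,
      Set.Ioo_inter_Ioi, max_eq_right hσ.1.le]
    rw [_root_.integral_smul_const, hKval σ ⟨hσ.1.le, hσ.2⟩]
  have hmain : (Real.Gamma α * Real.Gamma (1-α)) • (∫ s in (0:ℝ)..r, ((t-s) ^ (α-1)) • u s)
      = ∫ ξ in Set.Ioo (0:ℝ) r, (∫ σ in Set.Ioo (0:ℝ) r, H ξ σ) := by
    rw [hswap]
    rw [MeasureTheory.setIntegral_congr_fun measurableSet_Ioo hval_sec2]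
    rw [show (fun σ => ((Real.Gamma α * Real.Gamma (1-α)) * (t-σ) ^ (α-1)) • u σ)
        = fun σ => (Real.Gamma α * Real.Gamma (1-α)) • (((t-σ) ^ (α-1)) • u σ) from by
      funext σ; rw [mul_smul]]
    rw [MeasureTheory.integral_smul, intervalIntegral.integral_of_le hr,
      MeasureTheory.integral_Ioc_eq_integral_Ioo]
  have hnormb : ‖∫ ξ in Set.Ioo (0:ℝ) r, (∫ σ in Set.Ioo (0:ℝ) r, H ξ σ)‖
      ≤ (Real.Gamma α * (⨆ τ : Set.Icc (0:ℝ) t, ‖γ (τ:ℝ) - γ0‖))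
        * (Real.Gamma α * Real.Gamma (1-α)) := by
    set S := ⨆ τ : Set.Icc (0:ℝ) t, ‖γ (τ:ℝ) - γ0‖ with hSdef
    calc ‖∫ ξ in Set.Ioo (0:ℝ) r, (∫ σ in Set.Ioo (0:ℝ) r, H ξ σ)‖
        ≤ ∫ ξ in Set.Ioo (0:ℝ) r, (Real.Gamma α * S) * K ξ := by
          refine MeasureTheory.norm_integral_le_of_norm_le (hKint.const_mul _) ?_
          filter_upwards [ae_restrict_mem measurableSet_Ioo] with ξ hξ
          rw [hval_sec ξ hξ, norm_smul, norm_smul, Real.norm_eq_abs, Real.norm_eq_abs,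
            abs_of_nonneg (hKpos ξ hξ), abs_of_pos hΓ]
          rw [show Real.Gamma α * S * K ξ = K ξ * (Real.Gamma α * S) from by ring]
          refine mul_le_mul_of_nonneg_left ?_ (hKpos ξ hξ)
          exact mul_le_mul_of_nonneg_left
            (hS ξ ⟨hξ.1.le, by linarith [hξ.2]⟩) hΓ.le
      _ = (Real.Gamma α * S) * ∫ ξ in Set.Ioo (0:ℝ) r, K ξ := by
          rw [MeasureTheory.integral_const_mul]
      _ ≤ (Real.Gamma α * S) * (Real.Gamma α * Real.Gamma (1-α)) := by
          refine mul_le_mul_of_nonneg_left hmass ?_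
          exact mul_nonneg hΓ.le hS0
  -- conclude
  have hφ : (Real.Gamma α * Real.Gamma (1-α))
        * ‖∫ s in (0:ℝ)..r, ((t-s) ^ (α-1)) • u s‖
      ≤ (Real.Gamma α * (⨆ τ : Set.Icc (0:ℝ) t, ‖γ (τ:ℝ) - γ0‖))
        * (Real.Gamma α * Real.Gamma (1-α)) := by
    calc (Real.Gamma α * Real.Gamma (1-α)) * ‖∫ s in (0:ℝ)..r, ((t-s) ^ (α-1)) • u s‖
        = ‖(Real.Gamma α * Real.Gamma (1-α)) • (∫ s in (0:ℝ)..r, ((t-s) ^ (α-1)) • u s)‖ := by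
          rw [norm_smul, Real.norm_eq_abs, abs_of_pos hc]
      _ = ‖∫ ξ in Set.Ioo (0:ℝ) r, (∫ σ in Set.Ioo (0:ℝ) r, H ξ σ)‖ := by rw [hmain]
      _ ≤ _ := hnormb
  have hφ2 : ‖∫ s in (0:ℝ)..r, ((t-s) ^ (α-1)) • u s‖
      ≤ Real.Gamma α * (⨆ τ : Set.Icc (0:ℝ) t, ‖γ (τ:ℝ) - γ0‖) := by
    have := (mul_le_mul_iff_of_pos_right hc).1 (by linarith [hφ] :
      ‖∫ s in (0:ℝ)..r, ((t-s) ^ (α-1)) • u s‖ * (Real.Gamma α * Real.Gamma (1-α))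
        ≤ (Real.Gamma α * (⨆ τ : Set.Icc (0:ℝ) t, ‖γ (τ:ℝ) - γ0‖))
          * (Real.Gamma α * Real.Gamma (1-α)))
    exact this
  calc (1/Real.Gamma α) * ‖∫ s in (0:ℝ)..r, ((t-s) ^ (α-1)) • u s‖
      ≤ (1/Real.Gamma α) * (Real.Gamma α * (⨆ τ : Set.Icc (0:ℝ) t, ‖γ (τ:ℝ) - γ0‖)) := by
        exact mul_le_mul_of_nonneg_left hφ2 (by positivity)
    _ = ⨆ τ : Set.Icc (0:ℝ) t, ‖γ (τ:ℝ) - γ0‖ := by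
        field_simp
end

section
/- Let p ≥ 2, α ∈ (⌊p⌋/p, 1), κ ≤ 1/(1 − α + ⌊p⌋/p), and γ ∈ AC^α([0,T],ℝ^k) with u = D^α_{0+}(γ − γ_0). Then for 0 ≤ r ≤ t ≤ T, the (p/⌊p⌋)-variation of γ on [r,t] satisfies ‖γ‖_{p/⌊p⌋;[r,t]}^{p/⌊p⌋} ≤ C_{α,p,T} [ (∫_r^t |u_s|^{κ/(κ−1)} ds)^{p(κ−1)/(⌊p⌋κ)} + (∫_0^r |u_s|^{κ/(κ−1)} ds)^{p(κ−1)/(⌊p⌋κ)} ] (t−r)^{(p/⌊p⌋)(α−1+1/κ)}. -/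
open MeasureTheory intervalIntegral
open scoped BigOperators
open scoped NNReal

/-- The `p`-variation seminorm of a path `X` on `[s,t]`. -/
noncomputable def pVariation {E : Type*} [NormedAddCommGroup E]
    (p : ℝ) (X : ℝ → E) (s t : ℝ) : ℝ :=
  ⨆ n : ℕ, ⨆ u : Fin (n + 1) → ℝ,
    ⨆ _ : Monotone u ∧ u 0 = s ∧ u (Fin.last n) = t,
      (∑ i : Fin n, ‖X (u i.succ) - X (u i.castSucc)‖ ^ p) ^ (1 / p)


lemma aux_add_rpow_le {x y e : ℝ} (hx : 0 ≤ x) (hy : 0 ≤ y) (he : 0 ≤ e) :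
    (x + y) ^ e ≤ 2 ^ e * (x ^ e + y ^ e) := by
  have h1 : x + y ≤ 2 * max x y := by
    rcases le_total x y with h | h
    · simp only [max_eq_right h]; linarith
    · simp only [max_eq_left h]; linarith
  calc (x + y) ^ e ≤ (2 * max x y) ^ e :=
        Real.rpow_le_rpow (by positivity) h1 he
    _ = 2 ^ e * (max x y) ^ e := Real.mul_rpow (by norm_num) (le_max_of_le_left hx)
    _ ≤ 2 ^ e * (x ^ e + y ^ e) := by
        have : (max x y) ^ e ≤ x ^ e + y ^ e := by
          rcases le_total x y with h | h
          · rw [max_eq_right h]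
            have := Real.rpow_nonneg hx e
            linarith
          · rw [max_eq_left h]
            have := Real.rpow_nonneg hy e
            linarith
        have h2 : (0:ℝ) ≤ 2 ^ e := Real.rpow_nonneg (by norm_num) e
        nlinarith

lemma aux_sub_rpow_le {c d κ : ℝ} (hd : 0 ≤ d) (hdc : d ≤ c) (hκ : 1 ≤ κ) :
    (c - d) ^ κ ≤ c ^ κ - d ^ κ := by
  have hcd : (0:ℝ) ≤ c - d := by linarith
  have h : ((c - d).toNNReal ^ κ + d.toNNReal ^ κ : ℝ≥0)
      ≤ (((c - d).toNNReal + d.toNNReal) ^ κ : ℝ≥0) :=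
    NNReal.add_rpow_le_rpow_add _ _ hκ
  have h2 := NNReal.coe_le_coe.2 h
  push_cast at h2
  rw [Real.coe_toNNReal _ hcd, Real.coe_toNNReal _ hd] at h2
  have hc : c - d + d = c := by ring
  rw [hc] at h2
  linarith

lemma aux_rpow_le_mul {x z θ : ℝ} (hx : 0 ≤ x) (hxz : x ≤ z) (hθ : 1 ≤ θ) :
    x ^ θ ≤ z ^ (θ - 1) * x := by
  rcases eq_or_lt_of_le hx with h | h
  · rw [← h, Real.zero_rpow (by linarith), mul_zero]
  · have heq : x ^ θ = x ^ (θ - 1) * x := by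
      nth_rewrite 1 [show θ = (θ - 1) + 1 by ring]
      rw [Real.rpow_add h, Real.rpow_one]
    rw [heq]
    exact mul_le_mul_of_nonneg_right (Real.rpow_le_rpow hx hxz (by linarith)) hx

lemma aux_memℒp {X : Type*} [MeasurableSpace X] {μ : Measure X} {f : X → ℝ} {c : ℝ}
    (hc : 0 < c) (hm : AEStronglyMeasurable f μ)
    (hi : Integrable (fun x => ‖f x‖ ^ c) μ) : MemLp f (ENNReal.ofReal c) μ := by
  have hq0 : (ENNReal.ofReal c) ≠ 0 := by simp [ENNReal.ofReal_eq_zero, not_le, hc]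
  have hqt : (ENNReal.ofReal c) ≠ ⊤ := ENNReal.ofReal_ne_top
  have h := (memLp_norm_rpow_iff (q := ENNReal.ofReal c) (p := ENNReal.ofReal c) hm hq0 hqt)
  rw [ENNReal.toReal_ofReal hc.le, ENNReal.div_self hq0 hqt] at h
  exact h.mp (memLp_one_iff_integrable.mpr hi)

lemma aux_telescope {n : ℕ} (v : Fin (n+1) → ℝ) :
    ∑ i : Fin n, (v i.succ - v i.castSucc) = v (Fin.last n) - v 0 := by
  set w : ℕ → ℝ := fun j => v ⟨min j n, by omega⟩ with hw
  have key : ∀ i : Fin n, v i.succ - v i.castSucc = w (i.1 + 1) - w i.1 := by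
    intro i
    have h1 : (⟨min (i.1+1) n, by omega⟩ : Fin (n+1)) = i.succ := by
      ext; simp [Nat.min_eq_left i.isLt]
    have h2 : (⟨min i.1 n, by omega⟩ : Fin (n+1)) = i.castSucc := by
      ext; simp [Nat.min_eq_left i.isLt.le]
    rw [hw]; simp only []; rw [h1, h2]
  rw [Finset.sum_congr rfl (fun i _ => key i), Fin.sum_univ_eq_sum_range
    (fun j => w (j+1) - w j) n, Finset.sum_range_sub w n]
  have e1 : w n = v (Fin.last n) := by
    have h : (⟨min n n, by omega⟩ : Fin (n+1)) = Fin.last n := by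
      apply Fin.ext; simp [Fin.last]
    rw [hw]
    exact congrArg v h
  have e2 : w 0 = v 0 := by
    have h : (⟨min 0 n, by omega⟩ : Fin (n+1)) = 0 := by
      apply Fin.ext; simp
    rw [hw]
    exact congrArg v h
  rw [e1, e2]

lemma aux_memℒp' {X : Type*} [MeasurableSpace X] {μ : Measure X} {f : X → ℝ} {c : ℝ}
    (hc : 0 < c) (hm : AEStronglyMeasurable f μ)
    (hi : Integrable (fun x => ‖f x‖ ^ c) μ) : MemLp f (ENNReal.ofReal c) μ := by
  have hq0 : (ENNReal.ofReal c) ≠ 0 := by simp [ENNReal.ofReal_eq_zero, not_le, hc]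
  have hqt : (ENNReal.ofReal c) ≠ ⊤ := ENNReal.ofReal_ne_top
  have h := (memLp_norm_rpow_iff (q := ENNReal.ofReal c) (p := ENNReal.ofReal c) hm hq0 hqt)
  rw [ENNReal.toReal_ofReal hc.le, ENNReal.div_self hq0 hqt] at h
  exact h.mp (memLp_one_iff_integrable.mpr hi)

section
variable {k : ℕ} {α κ T : ℝ}

set_option maxHeartbeats 1000000 in
lemma aux_increment (hα0 : 0 < α) (hα2 : α < 1) (hκ : 1 < κ)
    (hδ0 : 0 < α - 1 + 1/κ) (hT : 0 < T)
    (u : ℝ → EuclideanSpace ℝ (Fin k)) (hu : Measurable u) (M : ℝ)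
    (hM : ∀ s ∈ Set.Icc (0:ℝ) T, ‖u s‖ ≤ M)
    (γ0 : EuclideanSpace ℝ (Fin k)) (γ : ℝ → EuclideanSpace ℝ (Fin k))
    (hγ : ∀ x ∈ Set.Icc (0:ℝ) T,
      γ x = γ0 + (1 / Real.Gamma α) • ∫ s in (0:ℝ)..x, ((x - s) ^ (α - 1)) • u s)
    (a b : ℝ) (h0a : 0 ≤ a) (hab : a ≤ b) (hbT : b ≤ T) :
    ‖γ b - γ a‖ ≤ ((1 / Real.Gamma α) * (1 / (κ * (α - 1 + 1/κ))) ^ (1/κ)) *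
      ((∫ s in a..b, ‖u s‖ ^ (κ/(κ-1))) ^ ((κ-1)/κ)
        + (∫ s in (0:ℝ)..a, ‖u s‖ ^ (κ/(κ-1))) ^ ((κ-1)/κ)) *
      (b - a) ^ (α - 1 + 1/κ) := by
  have hκ0 : (0:ℝ) < κ := by linarith
  set δ : ℝ := α - 1 + 1/κ with hδdef
  set κ' : ℝ := κ / (κ - 1) with hκ'def
  have hκ'0 : (0:ℝ) < κ' := by
    rw [hκ'def]; exact div_pos hκ0 (by linarith)
  have hG : 0 < Real.Gamma α := Real.Gamma_pos_of_pos hα0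
  have hM0 : 0 ≤ M := le_trans (norm_nonneg (u 0)) (hM 0 ⟨le_rfl, hT.le⟩)
  have hJ1 : 0 ≤ ∫ s in a..b, ‖u s‖ ^ κ' :=
    intervalIntegral.integral_nonneg hab (fun s _ => Real.rpow_nonneg (norm_nonneg _) _)
  have hJ2 : 0 ≤ ∫ s in (0:ℝ)..a, ‖u s‖ ^ κ' :=
    intervalIntegral.integral_nonneg h0a (fun s _ => Real.rpow_nonneg (norm_nonneg _) _)
  have hκδ : 0 < κ * δ := by positivity
  rcases eq_or_lt_of_le hab with rfl | hab'
  · rw [sub_self, norm_zero]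
    apply mul_nonneg (mul_nonneg (by positivity)
      (add_nonneg (Real.rpow_nonneg hJ1 _) (Real.rpow_nonneg hJ2 _)))
      (Real.rpow_nonneg (by linarith) _)
  -- measurability of kernels
  have hkm : ∀ c e : ℝ, Measurable fun s : ℝ => (c - s) ^ e := by
    intro c e
    have h : Measurable fun s : ℝ => c - s := measurable_const.sub measurable_id
    fun_prop
  have he1 : (-1:ℝ) < (α - 1) * κ := by
    have : κ * δ = (α - 1) * κ + 1 := by
      rw [hδdef]; field_simp
    linarith
  have heκδ : (α - 1) * κ + 1 = κ * δ := by
    rw [hδdef]; field_simp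
  -- kernel interval integrability
  have hki : ∀ (c e : ℝ), -1 < e → ∀ x y : ℝ,
      IntervalIntegrable (fun s => (c - s) ^ e) volume x y := by
    intro c e he x y
    have := (intervalIntegrable_rpow' (a := c - x) (b := c - y) he).comp_sub_left c
    simpa using this
  -- integrability of ‖u‖^κ' on subintervals of [0,T]
  have hL1 : ∀ x y : ℝ, 0 ≤ x → x ≤ y → y ≤ T →
      IntegrableOn (fun s => ‖u s‖ ^ κ') (Set.Ioc x y) := by
    intro x y hx hxy hyT
    have hmeas : Measurable fun s => ‖u s‖ ^ κ' := by
      have h := hu.norm; fun_prop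
    apply Integrable.mono' (integrable_const (M ^ κ')) hmeas.aestronglyMeasurable
    filter_upwards [ae_restrict_mem measurableSet_Ioc] with s hs
    rw [Real.norm_of_nonneg (Real.rpow_nonneg (norm_nonneg _) _)]
    exact Real.rpow_le_rpow (norm_nonneg _)
      (hM s ⟨hx.trans hs.1.le, hs.2.trans hyT⟩) hκ'0.le
  -- integrability of g • u
  have hL2 : ∀ (g : ℝ → ℝ), Measurable g → ∀ x y : ℝ, 0 ≤ x → x ≤ y → y ≤ T →
      IntervalIntegrable g volume x y →
      IntervalIntegrable (fun s => g s • u s) volume x y := by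
    intro g hg x y hx hxy hyT hgi
    rw [intervalIntegrable_iff_integrableOn_Ioc_of_le hxy] at hgi ⊢
    apply Integrable.mono' (hgi.norm.mul_const M) ((hg.smul hu).aestronglyMeasurable)
    filter_upwards [ae_restrict_mem measurableSet_Ioc] with s hs
    rw [show (g • u) s = g s • u s from rfl, norm_smul]
    exact mul_le_mul_of_nonneg_left (hM s ⟨hx.trans hs.1.le, hs.2.trans hyT⟩) (norm_nonneg _)
  -- splitting identity
  have haT : a ≤ T := hab.trans hbT
  have h0b : (0:ℝ) ≤ b := h0a.trans hab
  have i1 : IntervalIntegrable (fun s => ((b - s) ^ (α - 1)) • u s) volume 0 a :=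
    hL2 _ (hkm b _) 0 a le_rfl h0a haT (hki b _ (by linarith) 0 a)
  have i2 : IntervalIntegrable (fun s => ((b - s) ^ (α - 1)) • u s) volume a b :=
    hL2 _ (hkm b _) a b h0a hab hbT (hki b _ (by linarith) a b)
  have i3 : IntervalIntegrable (fun s => ((a - s) ^ (α - 1)) • u s) volume 0 a :=
    hL2 _ (hkm a _) 0 a le_rfl h0a haT (hki a _ (by linarith) 0 a)
  have hsplit : γ b - γ a = (1 / Real.Gamma α) •
      ((∫ s in a..b, ((b - s) ^ (α - 1)) • u s)
        + ∫ s in (0:ℝ)..a, (((b - s) ^ (α - 1)) - ((a - s) ^ (α - 1))) • u s) := by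
    rw [hγ b ⟨h0b, hbT⟩, hγ a ⟨h0a, haT⟩]
    have key1 : (∫ s in (0:ℝ)..a, ((b - s) ^ (α - 1)) • u s)
        + ∫ s in a..b, ((b - s) ^ (α - 1)) • u s
        = ∫ s in (0:ℝ)..b, ((b - s) ^ (α - 1)) • u s :=
      intervalIntegral.integral_add_adjacent_intervals i1 i2
    have key2 : ∫ s in (0:ℝ)..a, (((b - s) ^ (α - 1)) - ((a - s) ^ (α - 1))) • u s
        = (∫ s in (0:ℝ)..a, ((b - s) ^ (α - 1)) • u s)
          - ∫ s in (0:ℝ)..a, ((a - s) ^ (α - 1)) • u s := by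
      rw [← intervalIntegral.integral_sub i1 i3]
      congr 1
      funext s
      rw [sub_smul]
    rw [key2, ← key1]
    rw [smul_add, smul_add, smul_sub]
    abel
  -- Hölder helper
  have hconj : Real.HolderConjugate κ κ' := by
    rw [hκ'def]; exact Real.HolderConjugate.conjExponent hκ
  have holder : ∀ (g : ℝ → ℝ), Measurable g → ∀ x y : ℝ, 0 ≤ x → x ≤ y → y ≤ T →
      IntegrableOn (fun s => ‖g s‖ ^ κ) (Set.Ioc x y) →
      ‖∫ s in x..y, g s • u s‖ ≤ (∫ s in Set.Ioc x y, ‖g s‖ ^ κ) ^ (1/κ)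
        * (∫ s in x..y, ‖u s‖ ^ κ') ^ (1/κ') := by
    intro g hg x y hx hxy hyT hgκ
    have hg2 : MemLp (fun s => ‖u s‖) (ENNReal.ofReal κ')
        (volume.restrict (Set.Ioc x y)) := by
      apply aux_memℒp' hκ'0 (hu.norm.aestronglyMeasurable)
      exact (hL1 x y hx hxy hyT).congr (ae_of_all _ (fun s => by
        simp [Real.norm_of_nonneg (norm_nonneg (u s))]))
    have hg1 : MemLp g (ENNReal.ofReal κ) (volume.restrict (Set.Ioc x y)) :=
      aux_memℒp' hκ0 hg.aestronglyMeasurable hgκ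
    have hH := MeasureTheory.integral_mul_norm_le_Lp_mul_Lq (E := ℝ)
      (μ := volume.restrict (Set.Ioc x y)) hconj hg1 hg2
    calc ‖∫ s in x..y, g s • u s‖ ≤ ∫ s in x..y, ‖g s • u s‖ :=
          intervalIntegral.norm_integral_le_integral_norm hxy
      _ = ∫ s in Set.Ioc x y, ‖g s‖ * ‖(‖u s‖)‖ := by
          rw [intervalIntegral.integral_of_le hxy]
          apply setIntegral_congr_fun measurableSet_Ioc (fun s _ => ?_)
          rw [norm_smul, Real.norm_of_nonneg (norm_nonneg _)]
      _ ≤ (∫ s in Set.Ioc x y, ‖g s‖ ^ κ) ^ (1/κ)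
          * (∫ s in Set.Ioc x y, ‖(‖u s‖)‖ ^ κ') ^ (1/κ') := hH
      _ = (∫ s in Set.Ioc x y, ‖g s‖ ^ κ) ^ (1/κ)
          * (∫ s in x..y, ‖u s‖ ^ κ') ^ (1/κ') := by
          rw [intervalIntegral.integral_of_le hxy]
          congr 2
          apply setIntegral_congr_fun measurableSet_Ioc (fun s _ => ?_)
          simp [Real.norm_of_nonneg (norm_nonneg (u s))]
  -- kernel integral evaluation
  have hval : ∀ (c : ℝ) (x y : ℝ),
      ∫ s in x..y, (c - s) ^ ((α-1)*κ)
        = ((c-x) ^ (κ*δ) - (c-y) ^ (κ*δ)) / (κ*δ) := by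
    intro c x y
    have h2 : (∫ s in x..y, (fun w => w ^ ((α-1)*κ)) (c - s))
        = ∫ s in (c-y)..(c-x), s ^ ((α-1)*κ) :=
      intervalIntegral.integral_comp_sub_left (fun w => w ^ ((α-1)*κ)) c
    rw [show (∫ s in x..y, (c - s) ^ ((α-1)*κ))
        = (∫ s in x..y, (fun w => w ^ ((α-1)*κ)) (c - s)) from rfl, h2,
      integral_rpow (Or.inl he1), heκδ]
  set cst : ℝ := (1/(κ*δ)) ^ (1/κ) with hcst
  have hexp : 1/κ' = (κ-1)/κ := by rw [hκ'def, one_div_div]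
  have heq : ((b-a) ^ (κ*δ) / (κ*δ)) ^ (1/κ) = cst * (b-a) ^ δ := by
    rw [div_eq_mul_one_div,
      Real.mul_rpow (Real.rpow_nonneg (by linarith) _) (by positivity),
      ← Real.rpow_mul (by linarith : (0:ℝ) ≤ b - a)]
    have h3 : κ*δ*(1/κ) = δ := by field_simp
    rw [h3, hcst]; ring
  -- Term A
  have hstepA : ∀ s ∈ Set.Ioc a b, ‖(b - s) ^ (α-1)‖ ^ κ = (b-s) ^ ((α-1)*κ) := by
    intro s hs
    have hbs : (0:ℝ) ≤ b - s := by linarith [hs.2]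
    rw [Real.norm_of_nonneg (Real.rpow_nonneg hbs _), ← Real.rpow_mul hbs]
  have hintA : IntegrableOn (fun s => ‖(b - s) ^ (α-1)‖ ^ κ) (Set.Ioc a b) := by
    have hI := hki b ((α-1)*κ) he1 a b
    rw [intervalIntegrable_iff_integrableOn_Ioc_of_le hab] at hI
    exact hI.congr (by
      filter_upwards [ae_restrict_mem measurableSet_Ioc] with s hs
      exact (hstepA s hs).symm)
  have hIocA : ∫ s in Set.Ioc a b, ‖(b - s) ^ (α-1)‖ ^ κ = (b-a) ^ (κ*δ) / (κ*δ) := by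
    rw [setIntegral_congr_fun measurableSet_Ioc hstepA,
      ← intervalIntegral.integral_of_le hab, hval b a b]
    simp only [sub_self, Real.zero_rpow hκδ.ne', sub_zero]
  have hA : ‖∫ s in a..b, ((b - s) ^ (α-1)) • u s‖
      ≤ (cst * (b-a) ^ δ) * (∫ s in a..b, ‖u s‖ ^ κ') ^ (1/κ') := by
    have h := holder _ (hkm b (α-1)) a b h0a hab hbT hintA
    rwa [hIocA, heq] at h
  -- Term B
  set gB : ℝ → ℝ := fun s => (b - s) ^ (α-1) - (a - s) ^ (α-1) with hgB
  have hgBm : Measurable gB := (hkm b _).sub (hkm a _)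
  have hIB : IntegrableOn (fun s => ‖gB s‖ ^ κ) (Set.Ioc 0 a) := by
    have hib : IntegrableOn (fun s => (b - s) ^ ((α-1)*κ)) (Set.Ioc 0 a) := by
      have hI := hki b ((α-1)*κ) he1 0 a
      rwa [intervalIntegrable_iff_integrableOn_Ioc_of_le h0a] at hI
    have hia : IntegrableOn (fun s => (a - s) ^ ((α-1)*κ)) (Set.Ioc 0 a) := by
      have hI := hki a ((α-1)*κ) he1 0 a
      rwa [intervalIntegrable_iff_integrableOn_Ioc_of_le h0a] at hI
    have hmeas : Measurable fun s => ‖gB s‖ ^ κ := by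
      have h2 := hgBm.norm; fun_prop
    apply Integrable.mono' ((hib.add hia).const_mul ((2:ℝ) ^ κ))
      hmeas.aestronglyMeasurable
    filter_upwards [ae_restrict_mem measurableSet_Ioc] with s hs
    have has : (0:ℝ) ≤ a - s := by linarith [hs.2]
    have hbs : (0:ℝ) ≤ b - s := by linarith [hs.2]
    rw [Real.norm_of_nonneg (Real.rpow_nonneg (norm_nonneg _) _)]
    have h1 : ‖gB s‖ ≤ (b-s) ^ (α-1) + (a-s) ^ (α-1) := by
      rw [hgB]
      refine (norm_sub_le _ _).trans ?_
      rw [Real.norm_of_nonneg (Real.rpow_nonneg hbs _),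
        Real.norm_of_nonneg (Real.rpow_nonneg has _)]
    calc ‖gB s‖ ^ κ ≤ ((b-s) ^ (α-1) + (a-s) ^ (α-1)) ^ κ :=
          Real.rpow_le_rpow (norm_nonneg _) h1 hκ0.le
      _ ≤ 2 ^ κ * (((b-s) ^ (α-1)) ^ κ + ((a-s) ^ (α-1)) ^ κ) :=
          aux_add_rpow_le (Real.rpow_nonneg hbs _) (Real.rpow_nonneg has _) hκ0.le
      _ = 2 ^ κ * ((b-s) ^ ((α-1)*κ) + (a-s) ^ ((α-1)*κ)) := by
          rw [← Real.rpow_mul hbs, ← Real.rpow_mul has]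
  have hIocB : ∫ s in Set.Ioc 0 a, ‖gB s‖ ^ κ ≤ (b-a) ^ (κ*δ) / (κ*δ) := by
    have hib : IntervalIntegrable (fun s => (b - s) ^ ((α-1)*κ)) volume 0 a :=
      hki b ((α-1)*κ) he1 0 a
    have hia : IntervalIntegrable (fun s => (a - s) ^ ((α-1)*κ)) volume 0 a :=
      hki a ((α-1)*κ) he1 0 a
    have hibo : IntegrableOn (fun s => (b - s) ^ ((α-1)*κ)) (Set.Ioc 0 a) := by
      have hI := hib; rwa [intervalIntegrable_iff_integrableOn_Ioc_of_le h0a] at hI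
    have hiao : IntegrableOn (fun s => (a - s) ^ ((α-1)*κ)) (Set.Ioc 0 a) := by
      have hI := hia; rwa [intervalIntegrable_iff_integrableOn_Ioc_of_le h0a] at hI
    calc ∫ s in Set.Ioc 0 a, ‖gB s‖ ^ κ
        = ∫ s in Set.Ioo 0 a, ‖gB s‖ ^ κ := integral_Ioc_eq_integral_Ioo
      _ ≤ ∫ s in Set.Ioo 0 a, ((a-s) ^ ((α-1)*κ) - (b-s) ^ ((α-1)*κ)) := by
          have hsubIoo : IntegrableOn
              (fun s => (a-s) ^ ((α-1)*κ) - (b-s) ^ ((α-1)*κ)) (Set.Ioo 0 a) volume :=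
            MeasureTheory.IntegrableOn.mono_set (hiao.sub hibo) Set.Ioo_subset_Ioc_self
          apply setIntegral_mono_on (hIB.mono_set Set.Ioo_subset_Ioc_self)
            hsubIoo measurableSet_Ioo
          intro s hs
          have has : (0:ℝ) < a - s := by linarith [hs.2]
          have hbs : (0:ℝ) < b - s := by linarith [hs.2]
          have hmono : (b-s) ^ (α-1) ≤ (a-s) ^ (α-1) :=
            Real.rpow_le_rpow_of_nonpos has (by linarith) (by linarith)
          have hgBeq : ‖gB s‖ = (a-s) ^ (α-1) - (b-s) ^ (α-1) := by
            rw [hgB]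
            rw [Real.norm_of_nonpos (by simp only []; linarith)]
            ring
          rw [hgBeq, Real.rpow_mul has.le, Real.rpow_mul hbs.le]
          exact aux_sub_rpow_le (Real.rpow_nonneg hbs.le _) hmono hκ.le
      _ = ∫ s in Set.Ioc 0 a, ((a-s) ^ ((α-1)*κ) - (b-s) ^ ((α-1)*κ)) :=
          integral_Ioc_eq_integral_Ioo.symm
      _ = (∫ s in (0:ℝ)..a, (a-s) ^ ((α-1)*κ)) - ∫ s in (0:ℝ)..a, (b-s) ^ ((α-1)*κ) := by
          rw [← intervalIntegral.integral_of_le h0a, intervalIntegral.integral_sub hia hib]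
      _ = (a ^ (κ*δ) - 0 ^ (κ*δ)) / (κ*δ) - (b ^ (κ*δ) - (b-a) ^ (κ*δ)) / (κ*δ) := by
          rw [hval a 0 a, hval b 0 a]
          simp only [sub_zero, sub_self]
      _ ≤ (b-a) ^ (κ*δ) / (κ*δ) := by
          rw [Real.zero_rpow hκδ.ne', sub_zero, ← sub_div, div_le_div_iff₀ hκδ hκδ]
          have hab2 : a ^ (κ*δ) ≤ b ^ (κ*δ) := Real.rpow_le_rpow h0a hab hκδ.le
          nlinarith [Real.rpow_nonneg (show (0:ℝ) ≤ b - a by linarith) (κ*δ)]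
  have hB : ‖∫ s in (0:ℝ)..a, gB s • u s‖
      ≤ (cst * (b-a) ^ δ) * (∫ s in (0:ℝ)..a, ‖u s‖ ^ κ') ^ (1/κ') := by
    have h := holder gB hgBm 0 a le_rfl h0a haT hIB
    have h2 : (∫ s in Set.Ioc 0 a, ‖gB s‖ ^ κ) ^ (1/κ)
        ≤ ((b-a) ^ (κ*δ) / (κ*δ)) ^ (1/κ) :=
      Real.rpow_le_rpow (setIntegral_nonneg measurableSet_Ioc
        (fun s _ => Real.rpow_nonneg (norm_nonneg _) _)) hIocB (by positivity)
    rw [heq] at h2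
    refine h.trans ?_
    exact mul_le_mul_of_nonneg_right h2 (Real.rpow_nonneg hJ2 _)
  -- assembly
  rw [hsplit, norm_smul, Real.norm_of_nonneg (by positivity : (0:ℝ) ≤ 1 / Real.Gamma α)]
  refine le_trans (mul_le_mul_of_nonneg_left (norm_add_le _ _) (by positivity)) ?_
  refine le_trans (mul_le_mul_of_nonneg_left (add_le_add hA hB) (by positivity)) ?_
  apply le_of_eq
  rw [← hexp]
  ring
end

set_option maxHeartbeats 1000000 in
lemma aux_main {k : ℕ} {α κ T q : ℝ} (hα0 : 0 < α) (hα2 : α < 1) (hκ : 1 < κ)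
    (hδ0 : 0 < α - 1 + 1/κ) (hT : 0 < T) (hq1 : 1 ≤ q) (hθ1 : 1 ≤ q * (α - 1 + 1/κ))
    (u : ℝ → EuclideanSpace ℝ (Fin k)) (hu : Measurable u) (M : ℝ)
    (hM : ∀ s ∈ Set.Icc (0:ℝ) T, ‖u s‖ ≤ M)
    (γ0 : EuclideanSpace ℝ (Fin k)) (γ : ℝ → EuclideanSpace ℝ (Fin k))
    (hγ : ∀ x ∈ Set.Icc (0:ℝ) T,
      γ x = γ0 + (1 / Real.Gamma α) • ∫ s in (0:ℝ)..x, ((x - s) ^ (α - 1)) • u s)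
    (r t : ℝ) (hr : 0 ≤ r) (hrt : r ≤ t) (htT : t ≤ T) :
    pVariation q γ r t ^ q ≤
      (((1/Real.Gamma α) * (1/(κ*(α-1+1/κ))) ^ (1/κ)) ^ q * 2 ^ q
          * (1 + 2 ^ (q*((κ-1)/κ)))) *
        ((∫ s in r..t, ‖u s‖ ^ (κ/(κ-1))) ^ (q*((κ-1)/κ))
          + (∫ s in (0:ℝ)..r, ‖u s‖ ^ (κ/(κ-1))) ^ (q*((κ-1)/κ))) *
        (t - r) ^ (q*(α-1+1/κ)) := by
  have hκ0 : (0:ℝ) < κ := by linarith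
  have hκ1 : (0:ℝ) < κ - 1 := by linarith
  have hq0 : (0:ℝ) < q := by linarith
  set δ : ℝ := α - 1 + 1/κ with hδdef
  set κ' : ℝ := κ / (κ - 1) with hκ'def
  have hκ'0 : (0:ℝ) < κ' := div_pos hκ0 hκ1
  set θ : ℝ := q * δ with hθdef
  set β : ℝ := q * ((κ-1)/κ) with hβdef
  have hβ0 : (0:ℝ) < β := mul_pos hq0 (div_pos hκ1 hκ0)
  have hG : 0 < Real.Gamma α := Real.Gamma_pos_of_pos hα0
  set K : ℝ := (1/Real.Gamma α) * (1/(κ*δ)) ^ (1/κ) with hKdef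
  have hK0 : 0 < K := by
    rw [hKdef]
    exact mul_pos (by positivity)
      (Real.rpow_pos_of_pos (one_div_pos.2 (mul_pos hκ0 hδ0)) _)
  set I1 : ℝ := ∫ s in r..t, ‖u s‖ ^ κ' with hI1def
  set I2 : ℝ := ∫ s in (0:ℝ)..r, ‖u s‖ ^ κ' with hI2def
  have hI1nn : 0 ≤ I1 := by
    rw [hI1def]
    exact intervalIntegral.integral_nonneg hrt (fun s _ => Real.rpow_nonneg (norm_nonneg _) _)
  have hI2nn : 0 ≤ I2 := by
    rw [hI2def]
    exact intervalIntegral.integral_nonneg hr (fun s _ => Real.rpow_nonneg (norm_nonneg _) _)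
  set S : ℝ := I1 ^ β + I2 ^ β with hSdef
  have hSnn : 0 ≤ S :=
    add_nonneg (Real.rpow_nonneg hI1nn _) (Real.rpow_nonneg hI2nn _)
  set Cq : ℝ := K ^ q * 2 ^ q * (1 + 2 ^ β) with hCqdef
  have hCq0 : 0 < Cq := by
    rw [hCqdef]
    have h1 : (0:ℝ) < K ^ q := Real.rpow_pos_of_pos hK0 _
    have h2 : (0:ℝ) < (2:ℝ) ^ q := Real.rpow_pos_of_pos two_pos _
    have h3 : (0:ℝ) < (2:ℝ) ^ β := Real.rpow_pos_of_pos two_pos _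
    exact mul_pos (mul_pos h1 h2) (by linarith)
  -- integrability of ‖u‖^κ'
  have hL1 : ∀ x y : ℝ, 0 ≤ x → x ≤ y → y ≤ T →
      IntervalIntegrable (fun s => ‖u s‖ ^ κ') volume x y := by
    intro x y hx hxy hyT
    have hM0 : 0 ≤ M := le_trans (norm_nonneg (u 0)) (hM 0 ⟨le_rfl, hT.le⟩)
    have hmeas : Measurable fun s => ‖u s‖ ^ κ' := by
      have h := hu.norm; fun_prop
    rw [intervalIntegrable_iff_integrableOn_Ioc_of_le hxy]
    apply Integrable.mono' (integrable_const (M ^ κ')) hmeas.aestronglyMeasurable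
    filter_upwards [ae_restrict_mem measurableSet_Ioc] with s hs
    rw [Real.norm_of_nonneg (Real.rpow_nonneg (norm_nonneg _) _)]
    exact Real.rpow_le_rpow (norm_nonneg _)
      (hM s ⟨hx.trans hs.1.le, hs.2.trans hyT⟩) hκ'0.le
  -- integral monotonicity
  have hnn : ∀ x y : ℝ, x ≤ y → 0 ≤ ∫ s in x..y, ‖u s‖ ^ κ' := fun x y hxy =>
    intervalIntegral.integral_nonneg hxy (fun s _ => Real.rpow_nonneg (norm_nonneg _) _)
  have hJle1 : ∀ a b : ℝ, r ≤ a → a ≤ b → b ≤ t →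
      (∫ s in a..b, ‖u s‖ ^ κ') ≤ I1 := by
    intro a b hra hab hbt
    have h0a : 0 ≤ a := hr.trans hra
    have hbT : b ≤ T := hbt.trans htT
    have e1 : (∫ s in r..a, ‖u s‖ ^ κ') + (∫ s in a..b, ‖u s‖ ^ κ')
        = ∫ s in r..b, ‖u s‖ ^ κ' :=
      intervalIntegral.integral_add_adjacent_intervals
        (hL1 r a hr hra (hab.trans hbT)) (hL1 a b h0a hab hbT)
    have e2 : (∫ s in r..b, ‖u s‖ ^ κ') + (∫ s in b..t, ‖u s‖ ^ κ')
        = ∫ s in r..t, ‖u s‖ ^ κ' :=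
      intervalIntegral.integral_add_adjacent_intervals
        (hL1 r b hr (hra.trans hab) hbT) (hL1 b t (h0a.trans hab) hbt htT)
    have n1 := hnn r a hra
    have n2 := hnn b t hbt
    rw [hI1def]
    linarith
  have hJle2 : ∀ a : ℝ, r ≤ a → a ≤ t →
      (∫ s in (0:ℝ)..a, ‖u s‖ ^ κ') ≤ I2 + I1 := by
    intro a hra hat
    have e1 : (∫ s in (0:ℝ)..r, ‖u s‖ ^ κ') + (∫ s in r..a, ‖u s‖ ^ κ')
        = ∫ s in (0:ℝ)..a, ‖u s‖ ^ κ' :=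
      intervalIntegral.integral_add_adjacent_intervals
        (hL1 0 r le_rfl hr (hrt.trans htT)) (hL1 r a hr hra (hat.trans htT))
    have h2 := hJle1 r a le_rfl hra hat
    rw [hI2def]
    linarith
  -- per-increment bound
  have term : ∀ a b : ℝ, r ≤ a → a ≤ b → b ≤ t →
      ‖γ b - γ a‖ ^ q ≤ (Cq * S * (t-r) ^ (θ-1)) * (b - a) := by
    intro a b hra hab hbt
    have h0a : 0 ≤ a := hr.trans hra
    have hbT : b ≤ T := hbt.trans htT
    have hba0 : (0:ℝ) ≤ b - a := by linarith
    have hk := aux_increment hα0 hα2 hκ (hδdef ▸ hδ0) hT u hu M hM γ0 γ hγ a b h0a hab hbT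
    have hJann : 0 ≤ ∫ s in a..b, ‖u s‖ ^ κ' := hnn a b hab
    have hJ0nn : 0 ≤ ∫ s in (0:ℝ)..a, ‖u s‖ ^ κ' := hnn 0 a h0a
    set Ja : ℝ := ∫ s in a..b, ‖u s‖ ^ κ' with hJadef
    set J0 : ℝ := ∫ s in (0:ℝ)..a, ‖u s‖ ^ κ' with hJ0def
    have hXnn : 0 ≤ Ja ^ ((κ-1)/κ) := Real.rpow_nonneg hJann _
    have hYnn : 0 ≤ J0 ^ ((κ-1)/κ) := Real.rpow_nonneg hJ0nn _
    have hXYnn : 0 ≤ Ja ^ ((κ-1)/κ) + J0 ^ ((κ-1)/κ) := add_nonneg hXnn hYnn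
    have hKnn : 0 ≤ K ^ q := (Real.rpow_pos_of_pos hK0 _).le
    have h2q : (0:ℝ) ≤ (2:ℝ) ^ q := (Real.rpow_pos_of_pos two_pos _).le
    calc ‖γ b - γ a‖ ^ q
        ≤ (K * (Ja ^ ((κ-1)/κ) + J0 ^ ((κ-1)/κ)) * (b-a) ^ δ) ^ q :=
          Real.rpow_le_rpow (norm_nonneg _) hk hq0.le
      _ = K ^ q * (Ja ^ ((κ-1)/κ) + J0 ^ ((κ-1)/κ)) ^ q * ((b-a) ^ δ) ^ q := by
          rw [Real.mul_rpow (mul_nonneg hK0.le hXYnn) (Real.rpow_nonneg hba0 _),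
            Real.mul_rpow hK0.le hXYnn]
      _ ≤ K ^ q * (2 ^ q * ((Ja ^ ((κ-1)/κ)) ^ q + (J0 ^ ((κ-1)/κ)) ^ q))
            * ((b-a) ^ δ) ^ q := by
          apply mul_le_mul_of_nonneg_right
            (mul_le_mul_of_nonneg_left (aux_add_rpow_le hXnn hYnn hq0.le) hKnn)
            (Real.rpow_nonneg (Real.rpow_nonneg hba0 _) _)
      _ = K ^ q * (2 ^ q * (Ja ^ β + J0 ^ β)) * (b-a) ^ θ := by
          rw [← Real.rpow_mul hJann, ← Real.rpow_mul hJ0nn, ← Real.rpow_mul hba0,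
            mul_comm ((κ-1)/κ) q, mul_comm δ q]
      _ ≤ K ^ q * (2 ^ q * ((1 + 2 ^ β) * S)) * (b-a) ^ θ := by
          have hx : Ja ^ β ≤ I1 ^ β :=
            Real.rpow_le_rpow hJann (hJle1 a b hra hab hbt) hβ0.le
          have hy : J0 ^ β ≤ 2 ^ β * (I2 ^ β + I1 ^ β) :=
            le_trans (Real.rpow_le_rpow hJ0nn (hJle2 a hra (hab.trans hbt)) hβ0.le)
              (aux_add_rpow_le hI2nn hI1nn hβ0.le)
          have h1 : 0 ≤ I1 ^ β := Real.rpow_nonneg hI1nn _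
          have h2 : 0 ≤ I2 ^ β := Real.rpow_nonneg hI2nn _
          have h3 : (0:ℝ) < (2:ℝ) ^ β := Real.rpow_pos_of_pos two_pos _
          have hsum : Ja ^ β + J0 ^ β ≤ (1 + 2 ^ β) * S := by
            rw [hSdef]; nlinarith
          apply mul_le_mul_of_nonneg_right ?_ (Real.rpow_nonneg hba0 _)
          exact mul_le_mul_of_nonneg_left
            (mul_le_mul_of_nonneg_left hsum h2q) hKnn
      _ ≤ K ^ q * (2 ^ q * ((1 + 2 ^ β) * S)) * ((t-r) ^ (θ-1) * (b-a)) := by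
          apply mul_le_mul_of_nonneg_left
            (aux_rpow_le_mul hba0 (by linarith) (hθdef ▸ hθ1))
          have h3 : (0:ℝ) < (2:ℝ) ^ β := Real.rpow_pos_of_pos two_pos _
          nlinarith
      _ = (Cq * S * (t-r) ^ (θ-1)) * (b - a) := by rw [hCqdef]; ring
  -- partition sums
  have hBnn : 0 ≤ Cq * S * (t-r) ^ θ :=
    mul_nonneg (mul_nonneg hCq0.le hSnn) (Real.rpow_nonneg (by linarith) _)
  have hsum : ∀ (n : ℕ) (v : Fin (n+1) → ℝ), Monotone v → v 0 = r → v (Fin.last n) = t →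
      (∑ i : Fin n, ‖γ (v i.succ) - γ (v i.castSucc)‖ ^ q) ≤ Cq * S * (t-r) ^ θ := by
    intro n v hmono hv0 hvl
    have hvr : ∀ i : Fin (n+1), r ≤ v i := fun i => hv0 ▸ hmono (Fin.zero_le i)
    have hvt : ∀ i : Fin (n+1), v i ≤ t := fun i => hvl ▸ hmono (Fin.le_last i)
    have hpow : (t-r) ^ (θ-1) * (t-r) = (t-r) ^ θ := by
      rcases eq_or_lt_of_le hrt with rfl | h
      · rw [sub_self, mul_zero, Real.zero_rpow (by linarith : θ ≠ 0)]
      · nth_rewrite 2 [show θ = (θ-1)+1 by ring]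
        rw [Real.rpow_add (by linarith), Real.rpow_one]
    calc (∑ i : Fin n, ‖γ (v i.succ) - γ (v i.castSucc)‖ ^ q)
        ≤ ∑ i : Fin n, (Cq * S * (t-r) ^ (θ-1)) * (v i.succ - v i.castSucc) :=
          Finset.sum_le_sum (fun i _ => term (v i.castSucc) (v i.succ) (hvr _)
            (hmono (Fin.castSucc_lt_succ (i := i)).le) (hvt _))
      _ = (Cq * S * (t-r) ^ (θ-1)) * (t - r) := by
          rw [← Finset.mul_sum, aux_telescope v, hv0, hvl]
      _ = Cq * S * (t-r) ^ θ := by rw [mul_assoc, hpow]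
  -- conclude via sup
  have hBq : 0 ≤ (Cq * S * (t-r) ^ θ) ^ (1/q) := Real.rpow_nonneg hBnn _
  have hpv : pVariation q γ r t ≤ (Cq * S * (t-r) ^ θ) ^ (1/q) := by
    unfold pVariation
    refine Real.iSup_le (fun n => Real.iSup_le (fun v => Real.iSup_le (fun hc => ?_) hBq) hBq) hBq
    obtain ⟨h1, h2, h3⟩ := hc
    have hs := hsum n v h1 h2 h3
    exact Real.rpow_le_rpow (Finset.sum_nonneg fun i _ =>
      Real.rpow_nonneg (norm_nonneg _) _) hs (by positivity)
  have hpv0 : 0 ≤ pVariation q γ r t := by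
    unfold pVariation
    exact Real.iSup_nonneg fun n => Real.iSup_nonneg fun v => Real.iSup_nonneg fun _ =>
      Real.rpow_nonneg (Finset.sum_nonneg fun i _ => Real.rpow_nonneg (norm_nonneg _) _) _
  have hfin : ((Cq * S * (t-r) ^ θ) ^ (1/q)) ^ q = Cq * S * (t-r) ^ θ := by
    rw [← Real.rpow_mul hBnn, one_div_mul_cancel hq0.ne', Real.rpow_one]
  exact le_trans (Real.rpow_le_rpow hpv0 hpv hq0.le) (le_of_eq hfin)

/-- Proposition (cost function, fractional): for `γ ∈ AC^α([0,T],ℝ^k)` with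
`α ∈ (⌊p⌋/p, 1)` and `κ ≤ 1/(1-α+⌊p⌋/p)`, the `(p/⌊p⌋)`-variation of `γ` satisfies
`‖γ‖_{p/⌊p⌋;[r,t]}^{p/⌊p⌋} ≤ C_{α,p,T}[(∫_r^t |u|^{κ/(κ-1)})^{p(κ-1)/(⌊p⌋κ)}
  + (∫_0^r |u|^{κ/(κ-1)})^{p(κ-1)/(⌊p⌋κ)}](t-r)^{(p/⌊p⌋)(α-1+1/κ)}`. -/
theorem pVariation_fracIntegral_bound {k : ℕ} (p α κ T : ℝ)
    (hp : 2 ≤ p) (hT : 0 < T)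
    (hα : α ∈ Set.Ioo ((⌊p⌋₊ : ℝ) / p) 1) (hκ : 1 < κ)
    (hκα : κ ≤ 1 / (1 - α + (⌊p⌋₊ : ℝ) / p)) :
    ∃ C : ℝ, 0 < C ∧
      ∀ (u : ℝ → EuclideanSpace ℝ (Fin k)) (γ0 : EuclideanSpace ℝ (Fin k))
        (γ : ℝ → EuclideanSpace ℝ (Fin k)), Measurable u →
        (∃ M : ℝ, ∀ s ∈ Set.Icc (0 : ℝ) T, ‖u s‖ ≤ M) →
        (∀ t ∈ Set.Icc (0 : ℝ) T,
          γ t = γ0 + (1 / Real.Gamma α) • ∫ s in (0 : ℝ)..t, ((t - s) ^ (α - 1)) • u s) →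
        ∀ r t : ℝ, 0 ≤ r → r ≤ t → t ≤ T →
          pVariation (p / (⌊p⌋₊ : ℝ)) γ r t ^ (p / (⌊p⌋₊ : ℝ)) ≤
            C * ((∫ s in r..t, ‖u s‖ ^ (κ / (κ - 1))) ^ (p * (κ - 1) / ((⌊p⌋₊ : ℝ) * κ)) +
                  (∫ s in (0 : ℝ)..r, ‖u s‖ ^ (κ / (κ - 1))) ^ (p * (κ - 1) / ((⌊p⌋₊ : ℝ) * κ))) *
              (t - r) ^ ((p / (⌊p⌋₊ : ℝ)) * (α - 1 + 1 / κ)) := by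
  obtain ⟨hα1, hα2⟩ := hα
  have hp0 : (0:ℝ) < p := by linarith
  have hN2 : 2 ≤ ⌊p⌋₊ := Nat.le_floor (by exact_mod_cast hp)
  have hN0 : (0:ℝ) < (⌊p⌋₊ : ℝ) := by
    have : (0:ℕ) < ⌊p⌋₊ := by omega
    exact_mod_cast this
  have hNp : ((⌊p⌋₊ : ℝ)) ≤ p := Nat.floor_le hp0.le
  have hκ0 : (0:ℝ) < κ := by linarith
  have hα0 : 0 < α := lt_trans (div_pos hN0 hp0) hα1
  have hD : 0 < 1 - α + (⌊p⌋₊ : ℝ)/p := by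
    have h := div_pos hN0 hp0; linarith
  have hinv : 1 - α + (⌊p⌋₊ : ℝ)/p ≤ 1/κ := by
    rw [le_div_iff₀ hκ0]
    calc (1 - α + (⌊p⌋₊ : ℝ)/p) * κ
        ≤ (1 - α + (⌊p⌋₊ : ℝ)/p) * (1/(1 - α + (⌊p⌋₊ : ℝ)/p)) :=
          mul_le_mul_of_nonneg_left hκα hD.le
      _ = 1 := mul_one_div_cancel hD.ne'
  have hδ0 : 0 < α - 1 + 1/κ := by
    have h := div_pos hN0 hp0; linarith
  have hq1 : 1 ≤ p / (⌊p⌋₊ : ℝ) := (one_le_div hN0).2 hNp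
  have hθ1 : 1 ≤ (p/(⌊p⌋₊ : ℝ)) * (α - 1 + 1/κ) := by
    have h1 : (⌊p⌋₊ : ℝ)/p ≤ α - 1 + 1/κ := by linarith
    calc (1:ℝ) = (p/(⌊p⌋₊ : ℝ)) * ((⌊p⌋₊ : ℝ)/p) := by field_simp
      _ ≤ _ := mul_le_mul_of_nonneg_left h1 (by positivity)
  have hG : 0 < Real.Gamma α := Real.Gamma_pos_of_pos hα0
  set Cst : ℝ := ((1/Real.Gamma α) * (1/(κ*(α-1+1/κ))) ^ (1/κ)) ^ (p/(⌊p⌋₊:ℝ))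
      * 2 ^ (p/(⌊p⌋₊:ℝ)) * (1 + 2 ^ ((p/(⌊p⌋₊:ℝ))*((κ-1)/κ))) with hCst
  have hCst0 : 0 < Cst := by
    rw [hCst]
    have hK0 : 0 < (1/Real.Gamma α) * (1/(κ*(α-1+1/κ))) ^ (1/κ) :=
      mul_pos (by positivity)
        (Real.rpow_pos_of_pos (one_div_pos.2 (mul_pos hκ0 hδ0)) _)
    have h1 := Real.rpow_pos_of_pos hK0 (p/(⌊p⌋₊:ℝ))
    have h2 := Real.rpow_pos_of_pos (show (0:ℝ) < 2 by norm_num) (p/(⌊p⌋₊:ℝ))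
    have h3 := Real.rpow_pos_of_pos (show (0:ℝ) < 2 by norm_num) ((p/(⌊p⌋₊:ℝ))*((κ-1)/κ))
    exact mul_pos (mul_pos h1 h2) (by linarith)
  refine ⟨Cst, hCst0, ?_⟩
  intro u γ0 γ hu hbdd hγ r t hr hrt htT
  obtain ⟨M, hM⟩ := hbdd
  have h := aux_main (q := p/(⌊p⌋₊:ℝ)) hα0 hα2 hκ hδ0 hT hq1 hθ1 u hu M hM γ0 γ hγ
    r t hr hrt htT
  have hexp : p * (κ-1) / ((⌊p⌋₊:ℝ) * κ) = (p/(⌊p⌋₊:ℝ)) * ((κ-1)/κ) :=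
    (div_mul_div_comm p (⌊p⌋₊:ℝ) (κ-1) κ).symm
  rw [hexp]
  exact h
end
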